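/- arXiv:1802.00059 — 3 statements merged into one kernel-verified Lean document; each statement's English description precedes it below -/
import Mathlib

section
/- Fix a finite tree t with ℓ vertices and a automorphisms, and a constant c > 0. In G(n, c/n), the expected number of connected components isomorphic to t is asymptotically (ℓ!/a)·c^{ℓ-1}·e^{-ℓc}·n/ℓ! = Θ(n) as n → ∞. -/
open Filter Topology

/-- The probability weight of a specific outcome `g` (a choice of presence/absence for
each potential edge) in the Erdős–Rényi model `G(n,p)`. -/
noncomputable def gnpWeight (n : ℕ) (p : ℝ) (g : Sym2 (Fin n) → Bool) : ℝ :=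
  ∏ e : Sym2 (Fin n), (if g e then p else 1 - p)

/-- Expectation of a real-valued graph functional under `G(n,p)`. -/
noncomputable def gnpExp (n : ℕ) (p : ℝ) (f : (Sym2 (Fin n) → Bool) → ℝ) : ℝ :=
  ∑ g : Sym2 (Fin n) → Bool, gnpWeight n p g * f g

open Classical in
/-- Probability of an event under `G(n,p)`. -/
noncomputable def gnpProb (n : ℕ) (p : ℝ) (A : (Sym2 (Fin n) → Bool) → Prop) : ℝ :=
  gnpExp n p (fun g => if A g then 1 else 0)

/-- The simple graph on `Fin n` determined by an outcome `g`. -/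
def graphOf {n : ℕ} (g : Sym2 (Fin n) → Bool) : SimpleGraph (Fin n) where
  Adj i j := i ≠ j ∧ g s(i, j) = true
  symm := by
    constructor
    intro i j h
    refine ⟨Ne.symm h.1, ?_⟩
    rw [Sym2.eq_swap]
    exact h.2
  loopless := ⟨fun i h => h.1 rfl⟩

/-- `S` induces a connected component of `G` isomorphic to the graph `t`:
the induced subgraph on `S` is a copy of `t` and no edges leave `S`. -/
def IsCompCopy {n ℓ : ℕ} (t : SimpleGraph (Fin ℓ)) (G : SimpleGraph (Fin n))
    (S : Finset (Fin n)) : Prop :=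
  (∃ φ : Fin ℓ ↪ Fin n, Set.range φ = ↑S ∧
      ∀ i j, t.Adj i j ↔ G.Adj (φ i) (φ j)) ∧
  ∀ u ∈ S, ∀ v, G.Adj u v → v ∈ S

open Classical Finset in
/-- key independence lemma -/
lemma gnpProb_forall_eq (n : ℕ) (p : ℝ) (A : Finset (Sym2 (Fin n))) (b : Sym2 (Fin n) → Bool) :
    gnpProb n p (fun g => ∀ e ∈ A, g e = b e) = ∏ e ∈ A, (if b e then p else 1 - p) := by
  classical
  unfold gnpProb gnpExp gnpWeight
  have key : ∀ g : Sym2 (Fin n) → Bool,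
      (∏ e : Sym2 (Fin n), (if g e then p else 1 - p)) *
        (@ite ℝ (∀ e ∈ A, g e = b e) (Classical.propDecidable _) 1 0)
      = ∏ e : Sym2 (Fin n),
          ((if g e then p else 1 - p) * (if e ∈ A then (if g e = b e then 1 else 0) else 1)) := by
    intro g
    by_cases h : ∀ e ∈ A, g e = b e
    · rw [if_pos h, mul_one]
      refine Finset.prod_congr rfl fun e _ => ?_
      by_cases he : e ∈ A
      · rw [if_pos he, if_pos (h e he), mul_one]
      · rw [if_neg he, mul_one]
    · rw [if_neg h, mul_zero]
      push_neg at h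
      obtain ⟨e₀, he₀, hne⟩ := h
      refine (Finset.prod_eq_zero (Finset.mem_univ e₀) ?_).symm
      rw [if_pos he₀, if_neg hne, mul_zero]
  simp only []
  simp only [key]
  rw [← Fintype.prod_sum
      (f := fun e (x : Bool) =>
        (if x then p else 1 - p) * (if e ∈ A then (if x = b e then (1:ℝ) else 0) else 1))]
  have per : ∀ e : Sym2 (Fin n),
      (∑ x : Bool, (if x then p else 1 - p) * (if e ∈ A then (if x = b e then (1:ℝ) else 0) else 1))
      = if e ∈ A then (if b e then p else 1 - p) else 1 := by
    intro e
    rw [Fintype.sum_bool]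
    by_cases he : e ∈ A
    · simp only [if_pos he]
      cases hb : b e <;> simp [hb]
    · simp only [if_neg he, mul_one]
      norm_num
  rw [Finset.prod_congr rfl fun e _ => per e]
  rw [← Finset.prod_filter]
  congr 1
  ext e
  simp

namespace TreeCompAux
open Finset
open scoped Classical

variable {n ℓ : ℕ}

/-- non-diagonal unordered pairs with both ends in `s` -/
noncomputable def pairsOf (s : Finset (Fin n)) : Finset (Sym2 (Fin n)) :=
  s.offDiag.image (Function.uncurry Sym2.mk)

lemma mem_pairsOf {s : Finset (Fin n)} {u v : Fin n} :
    s(u, v) ∈ pairsOf s ↔ u ∈ s ∧ v ∈ s ∧ u ≠ v := by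
  classical
  unfold pairsOf
  simp only [Finset.mem_image, Finset.mem_offDiag, Prod.exists, Function.uncurry_apply_pair]
  constructor
  · rintro ⟨x, y, ⟨hx, hy, hxy⟩, h⟩
    rw [Sym2.eq_iff] at h
    rcases h with ⟨rfl, rfl⟩ | ⟨rfl, rfl⟩
    · exact ⟨hx, hy, hxy⟩
    · exact ⟨hy, hx, fun h => hxy h.symm⟩
  · rintro ⟨hu, hv, huv⟩
    exact ⟨u, v, ⟨hu, hv, huv⟩, rfl⟩

lemma card_pairsOf (s : Finset (Fin n)) : (pairsOf s).card = s.card.choose 2 :=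
  Sym2.card_image_offDiag s

/-- non-diagonal pairs touching `S` -/
noncomputable def depSet (S : Finset (Fin n)) : Finset (Sym2 (Fin n)) :=
  pairsOf (univ : Finset (Fin n)) \ pairsOf Sᶜ

lemma mem_depSet {S : Finset (Fin n)} {u v : Fin n} :
    s(u, v) ∈ depSet S ↔ u ≠ v ∧ (u ∈ S ∨ v ∈ S) := by
  unfold depSet
  simp only [Finset.mem_sdiff, mem_pairsOf, Finset.mem_univ, true_and, Finset.mem_compl]
  tauto

lemma card_depSet (S : Finset (Fin n)) :
    (depSet S).card = n.choose 2 - (n - S.card).choose 2 := by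
  unfold depSet
  rw [Finset.card_sdiff_of_subset, card_pairsOf, card_pairsOf, Finset.card_univ, Fintype.card_fin,
    Finset.card_compl, Fintype.card_fin]
  intro e he
  induction e using Sym2.ind with
  | _ u v =>
    rw [mem_pairsOf] at he ⊢
    exact ⟨Finset.mem_univ u, Finset.mem_univ v, he.2.2⟩

variable (t : SimpleGraph (Fin ℓ))

/-- all labeled copies of `t` on vertex set `S` -/
noncomputable def copySet (S : Finset (Fin n)) : Finset (SimpleGraph (Fin n)) :=
  Finset.univ.filter (fun H => ∃ φ : Fin ℓ ↪ Fin n, Set.range φ = ↑S ∧ H = t.map φ)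

lemma mem_copySet {S : Finset (Fin n)} {H : SimpleGraph (Fin n)} :
    H ∈ copySet t S ↔ ∃ φ : Fin ℓ ↪ Fin n, Set.range φ = ↑S ∧ H = t.map φ := by
  unfold copySet; simp

/-- the event that `g` matches pattern `H` on all pairs touching `S` -/
def matches' (S : Finset (Fin n)) (H : SimpleGraph (Fin n)) (g : Sym2 (Fin n) → Bool) : Prop :=
  ∀ e ∈ depSet S, g e = (if e ∈ H.edgeSet then true else false)

lemma edgeFinset_subset_depSet {S : Finset (Fin n)} {H : SimpleGraph (Fin n)}
    (hH : H ∈ copySet t S) : ∀ e ∈ H.edgeSet, e ∈ depSet S := by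
  obtain ⟨φ, hrange, rfl⟩ := (mem_copySet t).1 hH
  intro e he
  induction e using Sym2.ind with
  | _ u v =>
    rw [SimpleGraph.mem_edgeSet] at he
    rw [mem_depSet]
    refine ⟨he.ne, ?_⟩
    rw [SimpleGraph.map_adj] at he
    obtain ⟨i, j, _, hi, _⟩ := he
    left
    rw [← Finset.mem_coe, ← hrange, ← hi]
    exact Set.mem_range_self i

lemma isCompCopy_iff_exists (S : Finset (Fin n)) (g : Sym2 (Fin n) → Bool) :
    IsCompCopy t (graphOf g) S ↔ ∃ H ∈ copySet t S, matches' S H g := by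
  constructor
  · rintro ⟨⟨φ, hrange, hadj⟩, hclosed⟩
    refine ⟨t.map φ, (mem_copySet t).2 ⟨φ, hrange, rfl⟩, ?_⟩
    intro e he
    induction e using Sym2.ind with
    | _ u v =>
      rw [mem_depSet] at he
      obtain ⟨huv, hor⟩ := he
      cases hb : g s(u, v) with
      | true =>
        have hGadj : (graphOf g).Adj u v := ⟨huv, hb⟩
        have huS : u ∈ S := by
          rcases hor with h | h
          · exact h
          · exact hclosed v h u hGadj.symm
        have hvS : v ∈ S := hclosed u huS v hGadj
        have hu' : u ∈ Set.range φ := by rw [hrange]; exact huS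
        have hv' : v ∈ Set.range φ := by rw [hrange]; exact hvS
        obtain ⟨i, rfl⟩ := hu'
        obtain ⟨j, rfl⟩ := hv'
        have : t.Adj i j := (hadj i j).2 hGadj
        have : (t.map φ).Adj (φ i) (φ j) := SimpleGraph.map_adj_apply.2 this
        rw [if_pos ((SimpleGraph.mem_edgeSet _).2 this)]
      | false =>
        rw [if_neg]
        rw [SimpleGraph.mem_edgeSet, SimpleGraph.map_adj]
        rintro ⟨i, j, htij, rfl, rfl⟩
        have : (graphOf g).Adj (φ i) (φ j) := (hadj i j).1 htij
        rw [this.2] at hb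
        exact Bool.noConfusion hb
  · rintro ⟨H, hH, hmatch⟩
    obtain ⟨φ, hrange, rfl⟩ := (mem_copySet t).1 hH
    have hmemS : ∀ i, φ i ∈ S := fun i => by
      rw [← Finset.mem_coe, ← hrange]; exact Set.mem_range_self i
    constructor
    · refine ⟨φ, hrange, fun i j => ?_⟩
      constructor
      · intro htij
        have hne : φ i ≠ φ j := φ.injective.ne htij.ne
        have hdep : s(φ i, φ j) ∈ depSet S := mem_depSet.2 ⟨hne, Or.inl (hmemS i)⟩
        have := hmatch _ hdep
        rw [if_pos ((SimpleGraph.mem_edgeSet _).2 (SimpleGraph.map_adj_apply.2 htij))] at this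
        exact ⟨hne, this⟩
      · rintro ⟨hne, hg⟩
        have hdep : s(φ i, φ j) ∈ depSet S := mem_depSet.2 ⟨hne, Or.inl (hmemS i)⟩
        have := hmatch _ hdep
        rw [hg] at this
        have hadj : (t.map φ).Adj (φ i) (φ j) := by
          rw [← SimpleGraph.mem_edgeSet]
          by_contra hcon
          rw [if_neg hcon] at this
          exact Bool.noConfusion this
        exact SimpleGraph.map_adj_apply.1 hadj
    · intro u hu v ⟨hne, hg⟩
      have hdep : s(u, v) ∈ depSet S := mem_depSet.2 ⟨hne, Or.inl hu⟩
      have := hmatch _ hdep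
      rw [hg] at this
      have hadj : (t.map φ).Adj u v := by
        rw [← SimpleGraph.mem_edgeSet]
        by_contra hcon
        rw [if_neg hcon] at this
        exact Bool.noConfusion this
      rw [SimpleGraph.map_adj] at hadj
      obtain ⟨i, j, _, _, rfl⟩ := hadj
      exact hmemS j

lemma matches_unique {S : Finset (Fin n)} {H₁ H₂ : SimpleGraph (Fin n)}
    (h₁ : H₁ ∈ copySet t S) (h₂ : H₂ ∈ copySet t S) {g : Sym2 (Fin n) → Bool}
    (hm₁ : matches' S H₁ g) (hm₂ : matches' S H₂ g) : H₁ = H₂ := by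
  rw [← SimpleGraph.edgeSet_inj]
  ext e
  by_cases hdep : e ∈ depSet S
  · have := (hm₁ e hdep).symm.trans (hm₂ e hdep)
    by_cases he1 : e ∈ H₁.edgeSet <;> by_cases he2 : e ∈ H₂.edgeSet <;>
      simp [he1, he2] at this ⊢
  · constructor
    · intro he
      exact absurd (edgeFinset_subset_depSet t h₁ e he) hdep
    · intro he
      exact absurd (edgeFinset_subset_depSet t h₂ e he) hdep

lemma edgeSet_map_eq (φ : Fin ℓ ↪ Fin n) :
    (t.map φ).edgeSet = Sym2.map φ '' t.edgeSet := by
  ext e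
  induction e using Sym2.ind with
  | _ u v =>
    rw [SimpleGraph.mem_edgeSet, SimpleGraph.map_adj]
    constructor
    · rintro ⟨i, j, hij, rfl, rfl⟩
      exact ⟨s(i, j), (SimpleGraph.mem_edgeSet _).2 hij, rfl⟩
    · rintro ⟨e₀, he₀, hmap⟩
      induction e₀ using Sym2.ind with
      | _ i j =>
        rw [Sym2.map_pair_eq, Sym2.eq_iff] at hmap
        rw [SimpleGraph.mem_edgeSet] at he₀
        rcases hmap with ⟨rfl, rfl⟩ | ⟨rfl, rfl⟩
        · exact ⟨i, j, he₀, rfl, rfl⟩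
        · exact ⟨j, i, he₀.symm, rfl, rfl⟩

lemma ncard_edgeSet_map (φ : Fin ℓ ↪ Fin n) :
    (t.map φ).edgeSet.ncard = t.edgeSet.ncard := by
  rw [edgeSet_map_eq]
  exact Set.ncard_image_of_injective _ (Sym2.map.injective φ.injective)

lemma card_filter_edge {S : Finset (Fin n)} {H : SimpleGraph (Fin n)}
    (hH : H ∈ copySet t S) :
    ((depSet S).filter (· ∈ H.edgeSet)).card = t.edgeSet.ncard := by
  classical
  have hsub := edgeFinset_subset_depSet t hH
  have : (depSet S).filter (· ∈ H.edgeSet) = H.edgeSet.toFinset := by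
    ext e
    simp only [Finset.mem_filter, Set.mem_toFinset]
    exact ⟨fun h => h.2, fun h => ⟨hsub e h, h⟩⟩
  rw [this, ← Set.ncard_eq_toFinset_card']
  obtain ⟨φ, _, rfl⟩ := (mem_copySet t).1 hH
  exact ncard_edgeSet_map t φ

/-- the probability that `g` matches pattern `H` -/
lemma gnpProb_matches (p : ℝ) {S : Finset (Fin n)} {H : SimpleGraph (Fin n)}
    (hH : H ∈ copySet t S) :
    gnpProb n p (matches' S H) =
      p ^ t.edgeSet.ncard * (1 - p) ^ ((depSet S).card - t.edgeSet.ncard) := by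
  classical
  unfold matches'
  rw [gnpProb_forall_eq]
  have : ∀ e ∈ depSet S,
      (if (if e ∈ H.edgeSet then true else false) then p else 1 - p)
        = if e ∈ H.edgeSet then p else 1 - p := by
    intro e _
    by_cases he : e ∈ H.edgeSet <;> simp [he]
  rw [Finset.prod_congr rfl this, Finset.prod_ite, Finset.prod_const, Finset.prod_const]
  have h1 : ((depSet S).filter (· ∈ H.edgeSet)).card = t.edgeSet.ncard :=
    card_filter_edge t hH
  have h2 : ((depSet S).filter (¬ · ∈ H.edgeSet)).card
      = (depSet S).card - t.edgeSet.ncard := by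
    have := Finset.card_filter_add_card_filter_not
      (s := depSet S) (p := (· ∈ H.edgeSet))
    omega
  rw [h1, h2]

lemma gnpProb_isCompCopy (p : ℝ) (S : Finset (Fin n)) :
    gnpProb n p (fun g => IsCompCopy t (graphOf g) S)
      = (copySet t S).card *
        (p ^ t.edgeSet.ncard * (1 - p) ^ ((depSet S).card - t.edgeSet.ncard)) := by
  classical
  have key : ∀ g : Sym2 (Fin n) → Bool,
      (@ite ℝ (IsCompCopy t (graphOf g) S) (Classical.propDecidable _) 1 0)
        = ∑ H ∈ copySet t S,
            (@ite ℝ (matches' S H g) (Classical.propDecidable _) 1 0) := by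
    intro g
    by_cases hcc : IsCompCopy t (graphOf g) S
    · obtain ⟨H₀, hH₀, hm₀⟩ := (isCompCopy_iff_exists t S g).1 hcc
      rw [if_pos hcc]
      rw [Finset.sum_eq_single_of_mem H₀ hH₀]
      · rw [if_pos hm₀]
      · intro H hH hne
        rw [if_neg]
        intro hm
        exact hne (matches_unique t hH hH₀ hm hm₀)
    · rw [if_neg hcc]
      symm
      refine Finset.sum_eq_zero fun H hH => ?_
      rw [if_neg]
      intro hm
      exact hcc ((isCompCopy_iff_exists t S g).2 ⟨H, hH, hm⟩)
  unfold gnpProb gnpExp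
  simp only [key, Finset.mul_sum]
  rw [Finset.sum_comm]
  have : ∀ H ∈ copySet t S,
      (∑ g : Sym2 (Fin n) → Bool, gnpWeight n p g *
          (@ite ℝ (matches' S H g) (Classical.propDecidable _) 1 0))
        = p ^ t.edgeSet.ncard * (1 - p) ^ ((depSet S).card - t.edgeSet.ncard) := by
    intro H hH
    have := gnpProb_matches t p hH
    unfold gnpProb gnpExp at this
    exact this
  rw [Finset.sum_congr rfl this, Finset.sum_const, nsmul_eq_mul]

lemma range_eq_image {S : Finset (Fin n)} {φ : Fin ℓ ↪ Fin n}
    (h : Set.range φ = ↑S) : S = Finset.univ.image φ :=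
  Finset.coe_injective (by
    rw [Finset.coe_image, Finset.coe_univ, Set.image_univ, h])

lemma copySet_eq_empty {S : Finset (Fin n)} (h : S.card ≠ ℓ) : copySet t S = ∅ := by
  rw [Finset.eq_empty_iff_forall_notMem]
  intro H hH
  obtain ⟨φ, hrange, _⟩ := (mem_copySet t).1 hH
  apply h
  rw [range_eq_image hrange, Finset.card_image_of_injective _ φ.injective,
    Finset.card_univ, Fintype.card_fin]

/-- the set of embeddings with range `S`, as an equiv type -/
noncomputable def embEquiv (S : Finset (Fin n)) :
    {φ : Fin ℓ ↪ Fin n // Set.range φ = ↑S} ≃ (Fin ℓ ≃ {x : Fin n // x ∈ S}) where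
  toFun φp := Equiv.ofBijective
    (fun i => ⟨φp.1 i, by
      have := Set.mem_range_self (f := ⇑φp.1) i
      rw [φp.2] at this
      exact Finset.mem_coe.1 this⟩)
    ⟨fun i j h => φp.1.injective (congrArg Subtype.val h),
     fun x => by
       have hx : (x : Fin n) ∈ Set.range φp.1 := by
         rw [φp.2]; exact Finset.mem_coe.2 x.2
       obtain ⟨i, hi⟩ := hx
       exact ⟨i, Subtype.ext hi⟩⟩
  invFun e := ⟨⟨fun i => (e i : Fin n), fun i j h => e.injective (Subtype.ext h)⟩, by
    ext x
    simp only [Set.mem_range, Finset.mem_coe, Function.Embedding.coeFn_mk]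
    constructor
    · rintro ⟨i, rfl⟩; exact (e i).2
    · intro hx; exact ⟨e.symm ⟨x, hx⟩, by show ((e (e.symm ⟨x, hx⟩)) : Fin n) = x; simp⟩⟩
  left_inv φp := Subtype.ext (by ext i; rfl)
  right_inv e := by ext i; rfl

@[simp] lemma embEquiv_apply_val (S : Finset (Fin n))
    (φp : {φ : Fin ℓ ↪ Fin n // Set.range φ = ↑S}) (i : Fin ℓ) :
    ((embEquiv S φp) i : Fin n) = φp.1 i := rfl

noncomputable def rangeD (ℓ : ℕ) (S : Finset (Fin n)) : Finset (Fin ℓ ↪ Fin n) :=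
  Finset.univ.filter (fun φ => Set.range φ = ↑S)

lemma card_rangeD {S : Finset (Fin n)} (hS : S.card = ℓ) :
    (rangeD ℓ S).card = ℓ.factorial := by
  classical
  rw [← Fintype.card_coe]
  have e1 : {φ // φ ∈ rangeD ℓ S} ≃ {φ : Fin ℓ ↪ Fin n // Set.range φ = ↑S} :=
    Equiv.subtypeEquivRight (fun φ => by unfold rangeD; simp)
  rw [Fintype.card_congr (e1.trans (embEquiv S))]
  have hcard : Fintype.card {x : Fin n // x ∈ S} = ℓ := by
    rw [Fintype.card_coe, hS]
  have e2 : Fin ℓ ≃ {x : Fin n // x ∈ S} := (Fintype.equivFinOfCardEq hcard).symm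
  rw [Fintype.card_equiv e2, Fintype.card_fin]

lemma map_comp_iso (σ : t ≃g t) (φ : Fin ℓ ↪ Fin n) :
    t.map (σ.toEquiv.toEmbedding.trans φ) = t.map φ := by
  ext u v
  simp only [SimpleGraph.map_adj, Function.Embedding.trans_apply,
    Equiv.coe_toEmbedding]
  constructor
  · rintro ⟨i, j, hij, rfl, rfl⟩
    exact ⟨σ i, σ j, σ.map_adj_iff.2 hij, rfl, rfl⟩
  · rintro ⟨i, j, hij, rfl, rfl⟩
    refine ⟨σ.symm i, σ.symm j, ?_, by simp, by simp⟩
    have := σ.symm.map_adj_iff.2 hij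
    simpa using this

lemma card_fiber {S : Finset (Fin n)} {φ₀ : Fin ℓ ↪ Fin n}
    (h₀ : Set.range φ₀ = ↑S) :
    ((rangeD ℓ S).filter (fun φ : Fin ℓ ↪ Fin n => t.map φ = t.map φ₀)).card = Nat.card (t ≃g t) := by
  classical
  rw [← Fintype.card_coe, ← Nat.card_eq_fintype_card]
  symm
  apply Nat.card_eq_of_bijective
    (f := fun σ : t ≃g t =>
      (⟨σ.toEquiv.toEmbedding.trans φ₀, by
        rw [Finset.mem_filter]
        refine ⟨?_, map_comp_iso t σ φ₀⟩
        unfold rangeD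
        rw [Finset.mem_filter]
        refine ⟨Finset.mem_univ _, ?_⟩
        rw [← h₀]
        show Set.range (⇑φ₀ ∘ ⇑σ.toEquiv) = Set.range ⇑φ₀
        exact σ.toEquiv.surjective.range_comp _⟩ :
        {φ // φ ∈ (rangeD ℓ S).filter (fun φ : Fin ℓ ↪ Fin n => t.map φ = t.map φ₀)}))
  constructor
  · intro σ σ' h
    have h' : ∀ i, φ₀ (σ i) = φ₀ (σ' i) := fun i =>
      congrFun (congrArg (fun (ψ : Fin ℓ ↪ Fin n) => (ψ : Fin ℓ → Fin n))
        (congrArg Subtype.val h)) i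
    have : ∀ i, σ i = σ' i := fun i => φ₀.injective (h' i)
    exact DFunLike.ext σ σ' this
  · rintro ⟨φ, hφ⟩
    rw [Finset.mem_filter] at hφ
    obtain ⟨hφD, hmap⟩ := hφ
    have hrange : Set.range φ = ↑S := by
      unfold rangeD at hφD
      rw [Finset.mem_filter] at hφD
      exact hφD.2
    set E := embEquiv (n := n) (ℓ := ℓ) S
    set π : Fin ℓ ≃ Fin ℓ := (E ⟨φ, hrange⟩).trans (E ⟨φ₀, h₀⟩).symm with hπ
    have hcomm : ∀ i, φ₀ (π i) = φ i := by
      intro i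
      have : (E ⟨φ₀, h₀⟩) (π i) = (E ⟨φ, hrange⟩) i := by
        rw [hπ]; simp
      have := congrArg Subtype.val this
      exact this
    have hauto : ∀ i j, t.Adj (π i) (π j) ↔ t.Adj i j := by
      intro i j
      rw [← SimpleGraph.map_adj_apply (G := t) (f := φ₀), hcomm i, hcomm j, ← hmap,
        SimpleGraph.map_adj_apply]
    refine ⟨⟨π, fun {i j} => hauto i j⟩, ?_⟩
    apply Subtype.ext
    apply DFunLike.ext
    intro i
    exact hcomm i

lemma copySet_eq_image (S : Finset (Fin n)) :
    copySet t S = (rangeD ℓ S).image (fun φ : Fin ℓ ↪ Fin n => t.map φ) := by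
  ext H
  rw [mem_copySet, Finset.mem_image]
  constructor
  · rintro ⟨φ, hr, rfl⟩
    exact ⟨φ, by unfold rangeD; simp [hr], rfl⟩
  · rintro ⟨φ, hφ, rfl⟩
    unfold rangeD at hφ
    rw [Finset.mem_filter] at hφ
    exact ⟨φ, hφ.2, rfl⟩

lemma card_copySet {S : Finset (Fin n)} (hS : S.card = ℓ) :
    Nat.card (t ≃g t) * (copySet t S).card = ℓ.factorial := by
  classical
  rw [copySet_eq_image]
  have hsum := Finset.card_eq_sum_card_image (fun φ : Fin ℓ ↪ Fin n => t.map φ) (rangeD ℓ S)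
  rw [card_rangeD hS] at hsum
  have hfib : ∀ H ∈ (rangeD ℓ S).image (fun φ : Fin ℓ ↪ Fin n => t.map φ),
      ((rangeD ℓ S).filter (fun φ : Fin ℓ ↪ Fin n => t.map φ = H)).card = Nat.card (t ≃g t) := by
    intro H hH
    rw [Finset.mem_image] at hH
    obtain ⟨φ₀, hφ₀, rfl⟩ := hH
    unfold rangeD at hφ₀
    rw [Finset.mem_filter] at hφ₀
    exact card_fiber t hφ₀.2
  rw [Finset.sum_congr rfl hfib, Finset.sum_const, smul_eq_mul, mul_comm] at hsum
  exact hsum.symm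

instance : Finite (t ≃g t) :=
  Finite.of_injective (fun σ => (σ : Fin ℓ ≃ Fin ℓ))
    (fun σ σ' h => DFunLike.ext σ σ' (fun i => congrFun (congrArg DFunLike.coe h) i))

lemma autCard_pos : 0 < Nat.card (t ≃g t) := by
  have : Nonempty (t ≃g t) := ⟨⟨Equiv.refl _, fun {a b} => Iff.rfl⟩⟩
  exact Nat.card_pos

lemma card_copySet' {S : Finset (Fin n)} (hS : S.card = ℓ) :
    (copySet t S).card = ℓ.factorial / Nat.card (t ≃g t) :=
  (Nat.div_eq_of_eq_mul_right (autCard_pos t) (card_copySet t hS).symm).symm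

lemma expectation_eq (p : ℝ) :
    gnpExp n p (fun g => (Nat.card {S : Finset (Fin n) // IsCompCopy t (graphOf g) S} : ℝ))
      = (n.choose ℓ : ℝ) * (ℓ.factorial / Nat.card (t ≃g t) : ℕ) *
          (p ^ t.edgeSet.ncard *
            (1 - p) ^ (n.choose 2 - (n - ℓ).choose 2 - t.edgeSet.ncard)) := by
  classical
  have hcast : ∀ g : Sym2 (Fin n) → Bool,
      (Nat.card {S : Finset (Fin n) // IsCompCopy t (graphOf g) S} : ℝ)
        = ∑ S : Finset (Fin n),
            (@ite ℝ (IsCompCopy t (graphOf g) S) (Classical.propDecidable _) 1 0) := by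
    intro g
    rw [Nat.card_eq_fintype_card, Fintype.card_subtype]
    rw [Finset.sum_boole]
  unfold gnpExp
  simp only [hcast, Finset.mul_sum]
  rw [Finset.sum_comm]
  have hterm : ∀ S : Finset (Fin n),
      (∑ g : Sym2 (Fin n) → Bool, gnpWeight n p g *
          (@ite ℝ (IsCompCopy t (graphOf g) S) (Classical.propDecidable _) 1 0))
        = ((copySet t S).card : ℝ) *
            (p ^ t.edgeSet.ncard *
              (1 - p) ^ ((depSet S).card - t.edgeSet.ncard)) := by
    intro S
    have := gnpProb_isCompCopy t p S
    unfold gnpProb gnpExp at this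
    exact this
  rw [Finset.sum_congr rfl fun S _ => hterm S]
  rw [← Finset.sum_filter_of_ne (p := fun S : Finset (Fin n) => S.card = ℓ)
    (f := fun S => ((copySet t S).card : ℝ) *
      (p ^ t.edgeSet.ncard * (1 - p) ^ ((depSet S).card - t.edgeSet.ncard)))
    (by
      intro S _ hne
      by_contra hcard
      simp only [copySet_eq_empty t hcard, Finset.card_empty, Nat.cast_zero, zero_mul] at hne
      exact hne rfl)]
  have hconst : ∀ S ∈ Finset.univ.filter (fun S : Finset (Fin n) => S.card = ℓ),
      ((copySet t S).card : ℝ) *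
          (p ^ t.edgeSet.ncard * (1 - p) ^ ((depSet S).card - t.edgeSet.ncard))
        = ((ℓ.factorial / Nat.card (t ≃g t) : ℕ) : ℝ) *
            (p ^ t.edgeSet.ncard *
              (1 - p) ^ (n.choose 2 - (n - ℓ).choose 2 - t.edgeSet.ncard)) := by
    intro S hS
    rw [Finset.mem_filter] at hS
    rw [card_copySet' t hS.2, card_depSet, hS.2]
  rw [Finset.sum_congr rfl hconst, Finset.sum_const, nsmul_eq_mul]
  have hfiltercard :
      (Finset.univ.filter (fun S : Finset (Fin n) => S.card = ℓ)).card = n.choose ℓ := by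
    have : Finset.univ.filter (fun S : Finset (Fin n) => S.card = ℓ)
        = Finset.powersetCard ℓ (Finset.univ : Finset (Fin n)) := by
      rw [Finset.powersetCard_eq_filter, Finset.powerset_univ]
    rw [this, Finset.card_powersetCard, Finset.card_univ, Fintype.card_fin]
  rw [hfiltercard, mul_assoc]

end TreeCompAux

section LimitPart
open Finset

lemma tendsto_descFactorial_div_pow (ℓ : ℕ) :
    Tendsto (fun n : ℕ => (n.descFactorial ℓ : ℝ) / (n : ℝ) ^ ℓ) atTop (𝓝 1) := by
  have h1 : Tendsto (fun n : ℕ => ∏ i ∈ range ℓ, (1 - (i : ℝ) / n)) atTop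
      (𝓝 (∏ _i ∈ range ℓ, (1 : ℝ))) := by
    refine tendsto_finset_prod _ (fun i _ => ?_)
    have := (tendsto_const_div_atTop_nhds_zero_nat (i : ℝ)).const_sub 1
    simpa using this
  rw [Finset.prod_const_one] at h1
  refine h1.congr' ?_
  filter_upwards [eventually_ge_atTop (max ℓ 1)] with n hn
  have hℓn : ℓ ≤ n := le_trans (le_max_left _ _) hn
  have hne : (n : ℝ) ≠ 0 := Nat.cast_ne_zero.2 (by omega)
  calc ∏ i ∈ range ℓ, (1 - (i : ℝ) / n)
      = ∏ i ∈ range ℓ, (((n - i : ℕ) : ℝ) / n) := by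
        refine Finset.prod_congr rfl (fun i hi => ?_)
        rw [mem_range] at hi
        rw [Nat.cast_sub (by omega), sub_div, div_self hne]
    _ = (∏ i ∈ range ℓ, ((n - i : ℕ) : ℝ)) / ∏ _i ∈ range ℓ, (n : ℝ) := by
        rw [Finset.prod_div_distrib]
    _ = (n.descFactorial ℓ : ℝ) / (n : ℝ) ^ ℓ := by
        rw [Finset.prod_const, card_range, ← Nat.cast_prod, ← Nat.descFactorial_eq_prod_range]

lemma tendsto_one_sub_div_pow_self (c : ℝ) :
    Tendsto (fun n : ℕ => (1 - c / n) ^ n) atTop (𝓝 (Real.exp (-c))) := by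
  have := Real.tendsto_one_add_div_pow_exp (-c)
  refine this.congr (fun n => ?_)
  rw [neg_div, ← sub_eq_add_neg]

lemma tendsto_base_one (c : ℝ) :
    Tendsto (fun n : ℕ => 1 - c / n) atTop (𝓝 1) := by
  have := (tendsto_const_div_atTop_nhds_zero_nat c).const_sub 1
  simpa using this

lemma eventually_base_pos (c : ℝ) :
    ∀ᶠ n : ℕ in atTop, 0 < 1 - c / (n : ℝ) := by
  have := (tendsto_base_one c).eventually (eventually_gt_nhds (by norm_num : (0:ℝ) < 1))
  exact this

lemma tendsto_pow_sub (c : ℝ) (ℓ : ℕ) :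
    Tendsto (fun n : ℕ => (1 - c / n) ^ (n - ℓ)) atTop (𝓝 (Real.exp (-c))) := by
  have hbase := tendsto_one_sub_div_pow_self c
  have hpowℓ : Tendsto (fun n : ℕ => (1 - c / n) ^ ℓ) atTop (𝓝 1) := by
    have := (tendsto_base_one c).pow ℓ
    simpa using this
  have hdiv := hbase.div hpowℓ one_ne_zero
  rw [div_one] at hdiv
  refine hdiv.congr' ?_
  filter_upwards [eventually_ge_atTop ℓ, eventually_base_pos c] with n hn hpos
  rw [Pi.div_apply, eq_comm, pow_sub₀ _ (ne_of_gt hpos) hn, ← div_eq_mul_inv]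

lemma main_limit (ℓ : ℕ) (hℓ : 1 ≤ ℓ) (N : ℕ) (K : ℕ) (c : ℝ) :
    Tendsto (fun n : ℕ =>
        (n.choose ℓ : ℝ) * N * ((c / n) ^ (ℓ - 1) * (1 - c / n) ^ (ℓ * (n - ℓ) + K)) / n)
      atTop (𝓝 ((N : ℝ) * c ^ (ℓ - 1) * Real.exp (-(ℓ : ℝ) * c) / ℓ.factorial)) := by
  have hA := tendsto_descFactorial_div_pow ℓ
  have hB : Tendsto (fun n : ℕ => ((1 - c / n) ^ (n - ℓ)) ^ ℓ) atTop
      (𝓝 (Real.exp (-c) ^ ℓ)) := (tendsto_pow_sub c ℓ).pow ℓ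
  have hC : Tendsto (fun n : ℕ => (1 - c / n) ^ K) atTop (𝓝 1) := by
    have := (tendsto_base_one c).pow K
    simpa using this
  have hcomb := ((hA.mul hB).mul hC).const_mul ((N : ℝ) * c ^ (ℓ - 1) / ℓ.factorial)
  have hval : ((N : ℝ) * c ^ (ℓ - 1) / ℓ.factorial) * ((1 * Real.exp (-c) ^ ℓ) * 1)
      = (N : ℝ) * c ^ (ℓ - 1) * Real.exp (-(ℓ : ℝ) * c) / ℓ.factorial := by
    rw [← Real.exp_nat_mul]
    have : (ℓ : ℝ) * (-c) = -(ℓ : ℝ) * c := by ring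
    rw [this]
    ring
  rw [hval] at hcomb
  refine hcomb.congr' ?_
  filter_upwards [eventually_ge_atTop 1] with n hn
  have hne : (n : ℝ) ≠ 0 := Nat.cast_ne_zero.2 (by omega)
  have hfac : (ℓ.factorial : ℝ) ≠ 0 := Nat.cast_ne_zero.2 (Nat.factorial_ne_zero ℓ)
  have hdesc : (n.descFactorial ℓ : ℝ) = (ℓ.factorial : ℝ) * (n.choose ℓ : ℝ) := by
    rw [← Nat.cast_mul, Nat.descFactorial_eq_factorial_mul_choose]
  have hpow1 : ((1 - c / (n : ℝ)) ^ (n - ℓ)) ^ ℓ = (1 - c / (n : ℝ)) ^ (ℓ * (n - ℓ)) := by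
    rw [← pow_mul, Nat.mul_comm]
  have hpow2 : (1 - c / (n : ℝ)) ^ (ℓ * (n - ℓ) + K)
      = (1 - c / (n : ℝ)) ^ (ℓ * (n - ℓ)) * (1 - c / (n : ℝ)) ^ K := pow_add _ _ _
  have hpow3 : (n : ℝ) ^ ℓ = (n : ℝ) ^ (ℓ - 1) * n := by
    conv_lhs => rw [show ℓ = ℓ - 1 + 1 by omega]
    rw [pow_succ]
  rw [hpow1, hpow2, hdesc, div_pow, hpow3]
  field_simp

end LimitPart

lemma choose_split (ℓ : ℕ) : ∀ n : ℕ, ℓ ≤ n →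
    n.choose 2 = (n - ℓ).choose 2 + (ℓ * (n - ℓ) + ℓ.choose 2) := by
  intro n
  induction n with
  | zero => intro h; interval_cases ℓ; simp
  | succ n ih =>
    intro h
    rcases Nat.lt_or_ge n ℓ with hlt | hge
    · have : ℓ = n + 1 := by omega
      subst this
      simp
    · have e1 : (n + 1).choose 2 = n.choose 2 + n := by
        rw [Nat.choose_succ_succ, Nat.choose_one_right, Nat.add_comm]
      have e2 : n + 1 - ℓ = (n - ℓ) + 1 := by omega
      have e3 : ((n - ℓ) + 1).choose 2 = (n - ℓ).choose 2 + (n - ℓ) := by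
        rw [Nat.choose_succ_succ, Nat.choose_one_right, Nat.add_comm]
      have e5 : ℓ * ((n - ℓ) + 1) = ℓ * (n - ℓ) + ℓ := by ring
      rw [e1, e2, e3, e5, ih hge]
      omega

lemma tree_edge_bound {ℓ : ℕ} (t : SimpleGraph (Fin ℓ)) :
    t.edgeSet.ncard ≤ ℓ.choose 2 := by
  classical
  rw [Set.ncard_eq_toFinset_card']
  have hsub : t.edgeSet.toFinset ⊆ TreeCompAux.pairsOf (Finset.univ : Finset (Fin ℓ)) := by
    intro e he
    induction e using Sym2.ind with
    | _ u v =>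
      rw [Set.mem_toFinset, SimpleGraph.mem_edgeSet] at he
      exact TreeCompAux.mem_pairsOf.2 ⟨Finset.mem_univ _, Finset.mem_univ _, he.ne⟩
  have := Finset.card_le_card hsub
  rwa [TreeCompAux.card_pairsOf, Finset.card_univ, Fintype.card_fin] at this


/-- for a fixed tree `t` with `ℓ` vertices and `a` automorphisms and a
constant `c > 0`, the expected number of components of `G(n, c/n)` isomorphic to `t`
is asymptotically `(ℓ!/a)·c^{ℓ-1}·e^{-ℓc}·n/ℓ! = Θ(n)`. -/
theorem gnp_expected_tree_components (ℓ : ℕ) (hℓ : 1 ≤ ℓ) (t : SimpleGraph (Fin ℓ))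
    (htconn : t.Connected) (htedges : t.edgeSet.ncard = ℓ - 1)
    (a : ℕ) (ha : Nat.card (t ≃g t) = a) (c : ℝ) (hc : 0 < c) :
    Tendsto (fun n : ℕ =>
        gnpExp n (c / n)
          (fun g => (Nat.card {S : Finset (Fin n) // IsCompCopy t (graphOf g) S} : ℝ))
        / n)
      atTop
      (𝓝 ((ℓ.factorial / a) * c ^ (ℓ - 1) * Real.exp (-(ℓ : ℝ) * c) / ℓ.factorial)) := by

  classical
  subst ha
  set a := Nat.card (t ≃g t) with ha
  have hapos : 0 < a := TreeCompAux.autCard_pos t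
  set N : ℕ := ℓ.factorial / a with hN
  have hbound : ℓ - 1 ≤ ℓ.choose 2 := htedges ▸ tree_edge_bound t
  set K : ℕ := ℓ.choose 2 - (ℓ - 1) with hK
  have hNa : a * N = ℓ.factorial := by
    have h1 := TreeCompAux.card_copySet (n := ℓ) t
      (S := (Finset.univ : Finset (Fin ℓ)))
      (by rw [Finset.card_univ, Fintype.card_fin])
    have h2 := TreeCompAux.card_copySet' (n := ℓ) t
      (S := (Finset.univ : Finset (Fin ℓ)))
      (by rw [Finset.card_univ, Fintype.card_fin])
    rw [h2] at h1
    exact h1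
  have hconst : ((N : ℕ) : ℝ) = (ℓ.factorial : ℝ) / (a : ℝ) := by
    have : ((a : ℝ)) ≠ 0 := Nat.cast_ne_zero.2 (by omega)
    field_simp
    rw [← Nat.cast_mul, Nat.mul_comm, ← hNa, Nat.mul_comm]
  have hmain := main_limit ℓ hℓ N K c
  rw [hconst] at hmain
  refine hmain.congr' ?_
  filter_upwards [eventually_ge_atTop ℓ] with n hn
  rw [TreeCompAux.expectation_eq t (c / n), htedges]
  have hexp : n.choose 2 - (n - ℓ).choose 2 - (ℓ - 1) = ℓ * (n - ℓ) + K := by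
    have := choose_split ℓ n hn
    omega
  rw [hexp]
  rw [← ha, ← hN, hconst]
end

section
/- Fix a finite tree t and a constant c > 0. The number of components of G(n, c/n) isomorphic to t, divided by its expectation, converges to 1 in probability as n → ∞; in particular, for every fixed k, with probability tending to 1 the random graph G(n, c/n) contains at least k components isomorphic to t. -/
open Filter Topology

open Finset
open scoped Classical

section master
variable {n : ℕ} {p : ℝ}

/-- master product lemma -/
lemma gnpExp_prod (h : Sym2 (Fin n) → Bool → ℝ) :
    gnpExp n p (fun g => ∏ e, h e (g e)) =
      ∏ e : Sym2 (Fin n), (p * h e true + (1 - p) * h e false) := by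
  unfold gnpExp gnpWeight
  have : ∀ g : Sym2 (Fin n) → Bool,
      (∏ e : Sym2 (Fin n), (if g e then p else 1 - p)) * (∏ e, h e (g e))
        = ∏ e : Sym2 (Fin n), ((if g e then p else 1 - p) * h e (g e)) := by
    intro g; rw [← Finset.prod_mul_distrib]
  rw [Fintype.sum_congr _ _ this,
    ← Fintype.prod_sum (fun (e : Sym2 (Fin n)) (b : Bool) => (if b then p else 1 - p) * h e b)]
  apply Finset.prod_congr rfl
  intro e _
  rw [Fintype.sum_bool]
  norm_num

lemma gnpExp_add (f h : (Sym2 (Fin n) → Bool) → ℝ) :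
    gnpExp n p (fun g => f g + h g) = gnpExp n p f + gnpExp n p h := by
  unfold gnpExp; rw [← Finset.sum_add_distrib]; congr 1; ext g; ring

lemma gnpExp_smul (a : ℝ) (f : (Sym2 (Fin n) → Bool) → ℝ) :
    gnpExp n p (fun g => a * f g) = a * gnpExp n p f := by
  unfold gnpExp; rw [Finset.mul_sum]; congr 1; ext g; ring

lemma gnpExp_sum {ι : Type*} (s : Finset ι) (F : ι → (Sym2 (Fin n) → Bool) → ℝ) :
    gnpExp n p (fun g => ∑ i ∈ s, F i g) = ∑ i ∈ s, gnpExp n p (F i) := by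
  unfold gnpExp
  rw [Finset.sum_comm]
  congr 1; ext g; rw [Finset.mul_sum]

lemma gnpExp_one : gnpExp n p (fun _ => (1:ℝ)) = 1 := by
  have := gnpExp_prod (n := n) (p := p) (fun _ _ => (1:ℝ))
  simpa using this

lemma gnpWeight_nonneg (hp : 0 ≤ p) (hp1 : p ≤ 1) (g : Sym2 (Fin n) → Bool) :
    0 ≤ gnpWeight n p g := by
  unfold gnpWeight
  apply Finset.prod_nonneg
  intro e _; split <;> linarith

lemma gnpExp_mono (hp : 0 ≤ p) (hp1 : p ≤ 1) {f h : (Sym2 (Fin n) → Bool) → ℝ}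
    (hfh : ∀ g, f g ≤ h g) : gnpExp n p f ≤ gnpExp n p h := by
  unfold gnpExp
  apply Finset.sum_le_sum
  intro g _
  exact mul_le_mul_of_nonneg_left (hfh g) (gnpWeight_nonneg hp hp1 g)

lemma gnpExp_nonneg (hp : 0 ≤ p) (hp1 : p ≤ 1) {f : (Sym2 (Fin n) → Bool) → ℝ}
    (hf : ∀ g, 0 ≤ f g) : 0 ≤ gnpExp n p f := by
  have h0 : gnpExp n p (fun _ => (0:ℝ)) = 0 := by unfold gnpExp; simp
  rw [← h0]; exact gnpExp_mono hp hp1 hf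

end master


section comb
variable {n ℓ : ℕ} (t : SimpleGraph (Fin ℓ))

def inn (S : Finset (Fin n)) (e : Sym2 (Fin n)) : Prop := ∀ x ∈ e, x ∈ S

def crossP (S : Finset (Fin n)) (e : Sym2 (Fin n)) : Prop :=
  (∃ x ∈ e, x ∈ S) ∧ (∃ x ∈ e, x ∉ S)

lemma not_cross_of_inn {S : Finset (Fin n)} {e : Sym2 (Fin n)} (h : inn S e) :
    ¬ crossP S e := by
  rintro ⟨-, y, hye, hyS⟩; exact hyS (h y hye)

lemma not_inn_of_inn_disj {S T : Finset (Fin n)} (hd : Disjoint S T)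
    {e : Sym2 (Fin n)} (h : inn S e) : ¬ inn T e := by
  intro h2
  induction e using Sym2.ind with
  | _ a b =>
    exact Finset.disjoint_left.1 hd (h a (Sym2.mem_mk_left a b)) (h2 a (Sym2.mem_mk_left a b))

lemma not_cross_of_inn_disj {S T : Finset (Fin n)} (hd : Disjoint S T)
    {e : Sym2 (Fin n)} (h : inn S e) : ¬ crossP T e := by
  rintro ⟨⟨x, hxe, hxT⟩, -⟩
  exact Finset.disjoint_left.1 hd (h x hxe) hxT

noncomputable def crossSet (S : Finset (Fin n)) : Finset (Sym2 (Fin n)) :=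
  univ.filter (crossP S)

noncomputable def innSet (S : Finset (Fin n)) : Finset (Sym2 (Fin n)) :=
  univ.filter (inn S)

noncomputable def Confs (S : Finset (Fin n)) : Finset (Sym2 (Fin n) → Bool) :=
  univ.filter (fun h => (∀ e, ¬ inn S e → h e = false) ∧
    ∃ φ : Fin ℓ ↪ Fin n, Set.range φ = ↑S ∧
      ∀ i j, t.Adj i j ↔ (φ i ≠ φ j ∧ h s(φ i, φ j) = true))

noncomputable def proj (S : Finset (Fin n)) (g : Sym2 (Fin n) → Bool) : Sym2 (Fin n) → Bool :=
  fun e => if inn S e then g e else false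

lemma cross_false_of_closed {S : Finset (Fin n)} {g : Sym2 (Fin n) → Bool}
    (hclosed : ∀ u ∈ S, ∀ v, (graphOf g).Adj u v → v ∈ S) :
    ∀ e, crossP S e → g e = false := by
  intro e
  induction e using Sym2.ind with
  | _ a b =>
    rintro ⟨⟨x, hxe, hxS⟩, ⟨y, hye, hyS⟩⟩
    by_contra hg
    rw [Bool.not_eq_false] at hg
    have hxy : x ≠ y := fun h => hyS (h ▸ hxS)
    rw [Sym2.mem_iff] at hxe hye
    have hadj : (graphOf g).Adj x y := by
      refine ⟨hxy, ?_⟩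
      rcases hxe with rfl | rfl <;> rcases hye with rfl | rfl
      · exact absurd rfl hxy
      · exact hg
      · rw [Sym2.eq_swap]; exact hg
      · exact absurd rfl hxy
    exact hyS (hclosed x hxS y hadj)

lemma icc_iff {S : Finset (Fin n)} (g : Sym2 (Fin n) → Bool) :
    IsCompCopy t (graphOf g) S ↔
      (proj S g ∈ Confs t S ∧ ∀ e, crossP S e → g e = false) := by
  constructor
  · rintro ⟨⟨φ, hrange, hadj⟩, hclosed⟩
    have hmemS : ∀ i : Fin ℓ, φ i ∈ S := by
      intro i
      have : φ i ∈ Set.range φ := Set.mem_range_self i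
      rw [hrange] at this; exact this
    refine ⟨?_, cross_false_of_closed hclosed⟩
    rw [Confs, Finset.mem_filter]
    refine ⟨Finset.mem_univ _, fun e he => by simp [proj, he], φ, hrange, fun i j => ?_⟩
    have hinn : inn S s(φ i, φ j) := by
      intro x hx
      rw [Sym2.mem_iff] at hx
      rcases hx with rfl | rfl <;> exact hmemS _
    rw [hadj i j]
    show (φ i ≠ φ j ∧ g s(φ i, φ j) = true) ↔ _
    rw [proj, if_pos hinn]
  · rintro ⟨hmem, hcross⟩
    rw [Confs, Finset.mem_filter] at hmem
    obtain ⟨-, -, φ, hrange, hiff⟩ := hmem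
    have hmemS : ∀ i : Fin ℓ, φ i ∈ S := by
      intro i
      have : φ i ∈ Set.range φ := Set.mem_range_self i
      rw [hrange] at this; exact this
    constructor
    · refine ⟨φ, hrange, fun i j => ?_⟩
      rw [hiff i j]
      have hinn : inn S s(φ i, φ j) := by
        intro x hx
        rw [Sym2.mem_iff] at hx
        rcases hx with rfl | rfl <;> exact hmemS _
      show _ ↔ (φ i ≠ φ j ∧ g s(φ i, φ j) = true)
      rw [proj, if_pos hinn]
    · intro u hu v hadj
      by_contra hv
      obtain ⟨huv, hg⟩ := hadj
      have : crossP S s(u, v) :=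
        ⟨⟨u, Sym2.mem_mk_left u v, hu⟩, ⟨v, Sym2.mem_mk_right u v, hv⟩⟩
      rw [hcross _ this] at hg
      exact Bool.false_ne_true hg

end comb

section comb2
variable {n ℓ : ℕ} (t : SimpleGraph (Fin ℓ)) (p : ℝ)

noncomputable def chi (S : Finset (Fin n)) (h : Sym2 (Fin n) → Bool)
    (e : Sym2 (Fin n)) (b : Bool) : ℝ :=
  if inn S e then (if b = h e then 1 else 0)
  else if crossP S e then (if b = false then 1 else 0) else 1

lemma chi_eq_boole (S : Finset (Fin n)) (h g : Sym2 (Fin n) → Bool) (e : Sym2 (Fin n)) :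
    chi S h e (g e) =
      if ((inn S e → g e = h e) ∧ (crossP S e → g e = false)) then 1 else 0 := by
  unfold chi
  by_cases h1 : inn S e <;> by_cases h2 : crossP S e <;>
    simp [h1, h2] <;> first
      | (exact absurd h2 (not_cross_of_inn h1))
      | tauto

lemma prod_chi (S : Finset (Fin n)) (h g : Sym2 (Fin n) → Bool) :
    (∏ e, chi S h e (g e)) =
      if ((∀ e, inn S e → g e = h e) ∧ (∀ e, crossP S e → g e = false)) then 1 else 0 := by
  rw [Finset.prod_congr rfl (fun e _ => chi_eq_boole S h g e), Fintype.prod_boole]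
  congr 1
  rw [eq_iff_iff, forall_and]

lemma eq_proj_of_match {S : Finset (Fin n)} {h g : Sym2 (Fin n) → Bool}
    (hmem : h ∈ Confs t S) (hma : ∀ e, inn S e → g e = h e) : h = proj S g := by
  rw [Confs, Finset.mem_filter] at hmem
  funext e
  by_cases he : inn S e
  · rw [proj, if_pos he, hma e he]
  · rw [proj, if_neg he, hmem.2.1 e he]

lemma indicator_eq_sum (S : Finset (Fin n)) (g : Sym2 (Fin n) → Bool) :
    (if IsCompCopy t (graphOf g) S then (1:ℝ) else 0) =
      ∑ h ∈ Confs t S, ∏ e, chi S h e (g e) := by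
  rw [Finset.sum_congr rfl (fun h _ => prod_chi S h g)]
  by_cases hI : IsCompCopy t (graphOf g) S
  · rw [if_pos hI]
    rw [icc_iff] at hI
    obtain ⟨hmem, hcross⟩ := hI
    rw [Finset.sum_eq_single_of_mem (proj S g) hmem]
    · rw [if_pos ⟨fun e he => by rw [proj, if_pos he], hcross⟩]
    · intro h hh hne
      rw [if_neg]
      rintro ⟨hma, -⟩
      exact hne (eq_proj_of_match t hh hma)
  · rw [if_neg hI]
    symm
    apply Finset.sum_eq_zero
    intro h hh
    rw [if_neg]
    rintro ⟨hma, hcr⟩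
    exact hI ((icc_iff t g).2 ⟨eq_proj_of_match t hh hma ▸ hh, hcr⟩)

noncomputable def innerW (S : Finset (Fin n)) (h : Sym2 (Fin n) → Bool) : ℝ :=
  ∏ e, (if inn S e then (if h e then p else 1 - p) else 1)

noncomputable def AA (S : Finset (Fin n)) : ℝ := ∑ h ∈ Confs t S, innerW p S h

lemma expY (S : Finset (Fin n)) :
    gnpExp n p (fun g => if IsCompCopy t (graphOf g) S then 1 else 0) =
      AA t p S * (1 - p) ^ (crossSet S).card := by
  have h1 : (fun g => if IsCompCopy t (graphOf g) S then (1:ℝ) else 0) =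
      fun g => ∑ h ∈ Confs t S, ∏ e, chi S h e (g e) := by
    funext g; exact indicator_eq_sum t S g
  rw [h1, gnpExp_sum]
  have h2 : ∀ h ∈ Confs t S, gnpExp n p (fun g => ∏ e, chi S h e (g e)) =
      innerW p S h * (1 - p) ^ (crossSet S).card := by
    intro h _
    rw [gnpExp_prod]
    have h3 : ∀ e : Sym2 (Fin n), p * chi S h e true + (1 - p) * chi S h e false =
        (if inn S e then (if h e then p else 1 - p) else 1) *
          (if crossP S e then 1 - p else 1) := by
      intro e
      unfold chi
      by_cases e1 : inn S e
      · rw [if_pos e1, if_pos e1, if_pos e1, if_neg (not_cross_of_inn e1)]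
        cases hb : h e <;> simp <;> ring
      · rw [if_neg e1, if_neg e1, if_neg e1]
        by_cases e2 : crossP S e
        · rw [if_pos e2, if_pos e2, if_pos e2]; simp
        · rw [if_neg e2, if_neg e2, if_neg e2]; ring
    rw [Finset.prod_congr rfl (fun e _ => h3 e), Finset.prod_mul_distrib]
    congr 1
    rw [crossSet, ← Finset.prod_filter, Finset.prod_const]
  rw [Finset.sum_congr rfl h2, AA, ← Finset.sum_mul]
end comb2

section pair
variable {n ℓ : ℕ} (t : SimpleGraph (Fin ℓ)) (p : ℝ)

lemma ite_one_zero_mul (P Q : Prop) :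
    (if P then (1:ℝ) else 0) * (if Q then 1 else 0) = if P ∧ Q then 1 else 0 := by
  by_cases hP : P <;> by_cases hQ : Q <;> simp [hP, hQ]

noncomputable def chi2 (S T : Finset (Fin n)) (h h' : Sym2 (Fin n) → Bool)
    (e : Sym2 (Fin n)) (b : Bool) : ℝ :=
  if inn S e then (if b = h e then 1 else 0)
  else if inn T e then (if b = h' e then 1 else 0)
  else if crossP S e ∨ crossP T e then (if b = false then 1 else 0) else 1

lemma chi2_eq_boole {S T : Finset (Fin n)} (hd : Disjoint S T)
    (h h' g : Sym2 (Fin n) → Bool) (e : Sym2 (Fin n)) :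
    chi2 S T h h' e (g e) =
      if ((inn S e → g e = h e) ∧ (inn T e → g e = h' e) ∧
          (crossP S e ∨ crossP T e → g e = false)) then 1 else 0 := by
  unfold chi2
  by_cases h1 : inn S e
  · have h2 : ¬ inn T e := not_inn_of_inn_disj hd h1
    have h3 : ¬ (crossP S e ∨ crossP T e) := by
      rintro (hc | hc)
      exacts [not_cross_of_inn h1 hc, not_cross_of_inn_disj hd h1 hc]
    simp [h1, h2, h3]
  · rw [if_neg h1]
    by_cases h2 : inn T e
    · have h3 : ¬ (crossP S e ∨ crossP T e) := by
        rintro (hc | hc)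
        exacts [not_cross_of_inn_disj hd.symm h2 hc, not_cross_of_inn h2 hc]
      simp [h1, h2, h3]
    · by_cases h3 : crossP S e ∨ crossP T e <;> simp [h1, h2, h3]

lemma prod_chi2 {S T : Finset (Fin n)} (hd : Disjoint S T)
    (h h' g : Sym2 (Fin n) → Bool) :
    (∏ e, chi2 S T h h' e (g e)) =
      if ((∀ e, inn S e → g e = h e) ∧ (∀ e, inn T e → g e = h' e) ∧
          (∀ e, crossP S e ∨ crossP T e → g e = false)) then 1 else 0 := by
  rw [Finset.prod_congr rfl (fun e _ => chi2_eq_boole hd h h' g e), Fintype.prod_boole]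
  congr 1
  rw [eq_iff_iff, forall_and, forall_and]

lemma indicator2_eq_sum {S T : Finset (Fin n)} (hd : Disjoint S T)
    (g : Sym2 (Fin n) → Bool) :
    (if (IsCompCopy t (graphOf g) S ∧ IsCompCopy t (graphOf g) T) then (1:ℝ) else 0) =
      ∑ h ∈ Confs t S, ∑ h' ∈ Confs t T, ∏ e, chi2 S T h h' e (g e) := by
  rw [← Finset.sum_product']
  rw [Finset.sum_congr rfl (fun x _ => prod_chi2 hd x.1 x.2 g)]
  by_cases hI : IsCompCopy t (graphOf g) S ∧ IsCompCopy t (graphOf g) T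
  · rw [if_pos hI]
    obtain ⟨hS, hT⟩ := hI
    rw [icc_iff] at hS hT
    rw [Finset.sum_eq_single_of_mem (proj S g, proj T g)
        (Finset.mem_product.2 ⟨hS.1, hT.1⟩)]
    · rw [if_pos]
      refine ⟨fun e he => by simp [proj, he], fun e he => by simp [proj, he],
        fun e he => ?_⟩
      rcases he with he | he
      exacts [hS.2 e he, hT.2 e he]
    · rintro ⟨h, h'⟩ hmem hne
      rw [Finset.mem_product] at hmem
      rw [if_neg]
      rintro ⟨hma, hma', -⟩
      exact hne (Prod.ext (eq_proj_of_match t hmem.1 hma) (eq_proj_of_match t hmem.2 hma'))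
  · rw [if_neg hI]
    symm
    apply Finset.sum_eq_zero
    rintro ⟨h, h'⟩ hmem
    rw [Finset.mem_product] at hmem
    rw [if_neg]
    rintro ⟨hma, hma', hcr⟩
    refine hI ⟨(icc_iff t g).2 ⟨eq_proj_of_match t hmem.1 hma ▸ hmem.1,
        fun e he => hcr e (Or.inl he)⟩,
      (icc_iff t g).2 ⟨eq_proj_of_match t hmem.2 hma' ▸ hmem.2,
        fun e he => hcr e (Or.inr he)⟩⟩

lemma expYY {S T : Finset (Fin n)} (hd : Disjoint S T) :
    gnpExp n p (fun g => (if IsCompCopy t (graphOf g) S then 1 else 0) *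
        (if IsCompCopy t (graphOf g) T then 1 else 0)) =
      AA t p S * AA t p T * (1 - p) ^ (crossSet S ∪ crossSet T).card := by
  have h1 : (fun g => (if IsCompCopy t (graphOf g) S then (1:ℝ) else 0) *
        (if IsCompCopy t (graphOf g) T then 1 else 0)) =
      fun g => ∑ h ∈ Confs t S, ∑ h' ∈ Confs t T, ∏ e, chi2 S T h h' e (g e) := by
    funext g
    rw [ite_one_zero_mul]
    exact indicator2_eq_sum t hd g
  rw [h1, gnpExp_sum]
  have h2 : ∀ h ∈ Confs t S,
      gnpExp n p (fun g => ∑ h' ∈ Confs t T, ∏ e, chi2 S T h h' e (g e)) =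
        ∑ h' ∈ Confs t T, innerW p S h * innerW p T h' *
          (1 - p) ^ (crossSet S ∪ crossSet T).card := by
    intro h _
    rw [gnpExp_sum]
    apply Finset.sum_congr rfl
    intro h' _
    rw [gnpExp_prod]
    have h3 : ∀ e : Sym2 (Fin n),
        p * chi2 S T h h' e true + (1 - p) * chi2 S T h h' e false =
        ((if inn S e then (if h e then p else 1 - p) else 1) *
          (if inn T e then (if h' e then p else 1 - p) else 1)) *
          (if crossP S e ∨ crossP T e then 1 - p else 1) := by
      intro e
      unfold chi2
      by_cases e1 : inn S e
      · have e2 : ¬ inn T e := not_inn_of_inn_disj hd e1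
        have e3 : ¬ (crossP S e ∨ crossP T e) := by
          rintro (hc | hc)
          exacts [not_cross_of_inn e1 hc, not_cross_of_inn_disj hd e1 hc]
        rw [if_pos e1, if_pos e1, if_pos e1, if_neg e2, if_neg e3]
        cases hb : h e <;> simp <;> ring
      · rw [if_neg e1, if_neg e1, if_neg e1]
        by_cases e2 : inn T e
        · have e3 : ¬ (crossP S e ∨ crossP T e) := by
            rintro (hc | hc)
            exacts [not_cross_of_inn_disj hd.symm e2 hc, not_cross_of_inn e2 hc]
          rw [if_pos e2, if_pos e2, if_pos e2, if_neg e3]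
          cases hb : h' e <;> simp <;> ring
        · rw [if_neg e2, if_neg e2, if_neg e2]
          by_cases e3 : crossP S e ∨ crossP T e
          · rw [if_pos e3, if_pos e3, if_pos e3]; simp
          · rw [if_neg e3, if_neg e3, if_neg e3]; ring
    rw [Finset.prod_congr rfl (fun e _ => h3 e), Finset.prod_mul_distrib,
      Finset.prod_mul_distrib]
    have hc : (∏ e : Sym2 (Fin n), if crossP S e ∨ crossP T e then 1 - p else 1) =
        (1 - p) ^ (crossSet S ∪ crossSet T).card := by
      have huni : (Finset.univ.filter fun e : Sym2 (Fin n) => crossP S e ∨ crossP T e) =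
          crossSet S ∪ crossSet T := by
        rw [crossSet, crossSet, ← Finset.filter_or]
      rw [← huni, ← Finset.prod_filter, Finset.prod_const]
    rw [hc]
    rfl
  rw [Finset.sum_congr rfl h2]
  symm
  rw [AA, AA, Finset.sum_mul_sum, Finset.sum_mul]
  apply Finset.sum_congr rfl
  intro h _
  rw [Finset.sum_mul]
end pair

section overlap
variable {n ℓ : ℕ} {t : SimpleGraph (Fin ℓ)}

lemma subset_of_comp_touch {G : SimpleGraph (Fin n)} {S T : Finset (Fin n)}
    (htconn : t.Connected) (hS : IsCompCopy t G S) (hT : IsCompCopy t G T)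
    {u : Fin n} (huS : u ∈ S) (huT : u ∈ T) : S ⊆ T := by
  obtain ⟨⟨φ, hrange, hadj⟩, -⟩ := hS
  have walkT : ∀ {a b : Fin ℓ} (_ : t.Walk a b), φ a ∈ T → φ b ∈ T := by
    intro a b w
    induction w with
    | nil => exact id
    | cons h w ih =>
      intro hmem
      exact ih (hT.2 _ hmem _ ((hadj _ _).1 h))
  intro v hv
  have hu' : u ∈ (↑S : Set (Fin n)) := huS
  have hv' : v ∈ (↑S : Set (Fin n)) := hv
  rw [← hrange] at hu' hv'
  obtain ⟨i, rfl⟩ := hu'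
  obtain ⟨j, rfl⟩ := hv'
  obtain ⟨w⟩ := htconn.preconnected i j
  exact walkT w huT

lemma comp_eq_of_not_disjoint {G : SimpleGraph (Fin n)} {S T : Finset (Fin n)}
    (htconn : t.Connected) (hS : IsCompCopy t G S) (hT : IsCompCopy t G T)
    (hnd : ¬ Disjoint S T) : S = T := by
  obtain ⟨u, huS, huT⟩ := Finset.not_disjoint_iff.1 hnd
  exact Finset.Subset.antisymm (subset_of_comp_touch htconn hS hT huS huT)
    (subset_of_comp_touch htconn hT hS huT huS)

lemma card_eq_of_mem_confs {S : Finset (Fin n)} {h : Sym2 (Fin n) → Bool}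
    (hh : h ∈ Confs t S) : S.card = ℓ := by
  rw [Confs, Finset.mem_filter] at hh
  obtain ⟨-, -, φ, hrange, -⟩ := hh
  have := Set.ncard_coe_finset S
  rw [← hrange] at this
  rw [← this, ← Nat.card_coe_set_eq, Nat.card_range_of_injective φ.injective,
    Nat.card_eq_fintype_card, Fintype.card_fin]

lemma crossSet_card_le (S : Finset (Fin n)) : (crossSet S).card ≤ S.card * n := by
  have hsub : crossSet S ⊆ (S ×ˢ (Finset.univ : Finset (Fin n))).image
      (fun x : Fin n × Fin n => s(x.1, x.2)) := by
    intro e he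
    rw [crossSet, Finset.mem_filter] at he
    obtain ⟨-, ⟨x, hxe, hxS⟩, -⟩ := he
    induction e using Sym2.ind with
    | _ a b =>
      rw [Sym2.mem_iff] at hxe
      rw [Finset.mem_image]
      rcases hxe with rfl | rfl
      · exact ⟨(x, b), Finset.mem_product.2 ⟨hxS, Finset.mem_univ _⟩, rfl⟩
      · exact ⟨(x, a), Finset.mem_product.2 ⟨hxS, Finset.mem_univ _⟩, by
          rw [Sym2.eq_swap]⟩
  calc (crossSet S).card ≤ _ := Finset.card_le_card hsub
    _ ≤ (S ×ˢ (Finset.univ : Finset (Fin n))).card := Finset.card_image_le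
    _ = S.card * n := by rw [Finset.card_product, Finset.card_univ, Fintype.card_fin]

lemma crossSet_inter_card_le {S T : Finset (Fin n)} (hd : Disjoint S T) :
    (crossSet S ∩ crossSet T).card ≤ S.card * T.card := by
  have hsub : crossSet S ∩ crossSet T ⊆ (S ×ˢ T).image
      (fun x : Fin n × Fin n => s(x.1, x.2)) := by
    intro e he
    rw [Finset.mem_inter, crossSet, crossSet, Finset.mem_filter, Finset.mem_filter] at he
    obtain ⟨⟨-, ⟨x, hxe, hxS⟩, -⟩, ⟨-, ⟨y, hye, hyT⟩, -⟩⟩ := he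
    have hxy : x ≠ y := fun hxy => Finset.disjoint_left.1 hd hxS (hxy ▸ hyT)
    induction e using Sym2.ind with
    | _ a b =>
      rw [Sym2.mem_iff] at hxe hye
      rw [Finset.mem_image]
      rcases hxe with rfl | rfl <;> rcases hye with rfl | rfl
      · exact absurd rfl hxy
      · exact ⟨(x, y), Finset.mem_product.2 ⟨hxS, hyT⟩, rfl⟩
      · exact ⟨(x, y), Finset.mem_product.2 ⟨hxS, hyT⟩, by rw [Sym2.eq_swap]⟩
      · exact absurd rfl hxy
  calc (crossSet S ∩ crossSet T).card ≤ _ := Finset.card_le_card hsub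
    _ ≤ (S ×ˢ T).card := Finset.card_image_le
    _ = S.card * T.card := Finset.card_product _ _

lemma innSet_card_le (S : Finset (Fin n)) : (innSet S).card ≤ S.card * S.card := by
  have hsub : innSet S ⊆ (S ×ˢ S).image (fun x : Fin n × Fin n => s(x.1, x.2)) := by
    intro e he
    rw [innSet, Finset.mem_filter] at he
    induction e using Sym2.ind with
    | _ a b =>
      rw [Finset.mem_image]
      exact ⟨(a, b), Finset.mem_product.2 ⟨he.2 a (Sym2.mem_mk_left a b),
        he.2 b (Sym2.mem_mk_right a b)⟩, rfl⟩
  calc (innSet S).card ≤ _ := Finset.card_le_card hsub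
    _ ≤ (S ×ˢ S).card := Finset.card_image_le
    _ = S.card * S.card := Finset.card_product _ _
end overlap

section bounds
variable {n ℓ : ℕ} {t : SimpleGraph (Fin ℓ)} {p : ℝ}

lemma innerW_nonneg (hp : 0 ≤ p) (hp1 : p ≤ 1) (S : Finset (Fin n))
    (h : Sym2 (Fin n) → Bool) : 0 ≤ innerW p S h := by
  apply Finset.prod_nonneg
  intro e _
  split
  · split <;> linarith
  · norm_num

lemma AA_nonneg (hp : 0 ≤ p) (hp1 : p ≤ 1) (S : Finset (Fin n)) : 0 ≤ AA t p S :=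
  Finset.sum_nonneg fun h _ => innerW_nonneg hp hp1 S h

lemma innerW_lower (hp : 0 ≤ p) (hp1 : p ≤ 1) (S : Finset (Fin n))
    (h : Sym2 (Fin n) → Bool) (hS : S.card = ℓ)
    (htrue : ((innSet S).filter (fun e => h e = true)).card ≤ ℓ - 1) :
    p ^ (ℓ - 1) * (1 - p) ^ (ℓ * ℓ) ≤ innerW p S h := by
  have key : innerW p S h =
      p ^ ((innSet S).filter (fun e => h e = true)).card *
        (1 - p) ^ ((innSet S).filter (fun e => ¬ h e = true)).card := by
    rw [innerW, ← Finset.prod_filter, ← innSet]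
    rw [Finset.prod_ite, Finset.prod_const, Finset.prod_const]
  rw [key]
  have hq0 : (0:ℝ) ≤ 1 - p := by linarith
  have hfalse : ((innSet S).filter (fun e => ¬ h e = true)).card ≤ ℓ * ℓ := by
    calc _ ≤ (innSet S).card := Finset.card_le_card (Finset.filter_subset _ _)
      _ ≤ S.card * S.card := innSet_card_le S
      _ = ℓ * ℓ := by rw [hS]
  apply mul_le_mul
  · exact pow_le_pow_of_le_one hp hp1 htrue
  · exact pow_le_pow_of_le_one hq0 (by linarith) hfalse
  · positivity
  · positivity

lemma exists_conf (htedges : t.edgeSet.ncard = ℓ - 1) {S : Finset (Fin n)}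
    (hS : S.card = ℓ) :
    ∃ h ∈ Confs t S, ((innSet S).filter (fun e => h e = true)).card ≤ ℓ - 1 := by
  classical
  let ψ := S.orderIsoOfFin hS
  let φ : Fin ℓ ↪ Fin n := ψ.toEquiv.toEmbedding.trans (Function.Embedding.subtype _)
  have hrange : Set.range φ = ↑S := by
    ext x
    constructor
    · rintro ⟨i, rfl⟩
      exact (ψ i).2
    · intro hx
      refine ⟨ψ.symm ⟨x, hx⟩, ?_⟩
      show ((ψ (ψ.symm ⟨x, hx⟩) : { x // x ∈ S }) : Fin n) = x
      rw [OrderIso.apply_symm_apply]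
  refine ⟨fun e => if (∃ i j, t.Adj i j ∧ e = s(φ i, φ j)) then true else false, ?_, ?_⟩
  · rw [Confs, Finset.mem_filter]
    refine ⟨Finset.mem_univ _, fun e he => ?_, φ, hrange, fun i j => ?_⟩
    · dsimp only
      rw [if_neg]
      rintro ⟨i, j, -, rfl⟩
      apply he
      intro x hx
      rw [Sym2.mem_iff] at hx
      have hm : ∀ k : Fin ℓ, φ k ∈ S := by
        intro k
        have : φ k ∈ Set.range φ := Set.mem_range_self k
        rw [hrange] at this; exact this
      rcases hx with rfl | rfl <;> exact hm _
    · constructor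
      · intro hadj
        refine ⟨fun hfi => hadj.ne (φ.injective hfi), ?_⟩
        show (if ∃ i' j', t.Adj i' j' ∧ s(φ i, φ j) = s(φ i', φ j') then true else false) = true
        rw [if_pos ⟨i, j, hadj, rfl⟩]
      · rintro ⟨hne, hb⟩
        replace hb : (if ∃ i' j', t.Adj i' j' ∧ s(φ i, φ j) = s(φ i', φ j')
            then true else false) = true := hb
        by_cases hex : ∃ i' j', t.Adj i' j' ∧ s(φ i, φ j) = s(φ i', φ j')
        · obtain ⟨i', j', hadj, heq⟩ := hex
          rw [Sym2.eq_iff] at heq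
          rcases heq with ⟨h1, h2⟩ | ⟨h1, h2⟩
          · rwa [φ.injective h1, φ.injective h2]
          · rw [φ.injective h1, φ.injective h2]
            exact hadj.symm
        · rw [if_neg hex] at hb
          exact absurd hb (by simp)
  · have hsub : (innSet S).filter
        (fun e => (if (∃ i j, t.Adj i j ∧ e = s(φ i, φ j)) then true else false) = true) ⊆
        t.edgeFinset.image (Sym2.map φ) := by
      intro e he
      rw [Finset.mem_filter] at he
      obtain ⟨-, hb⟩ := he
      by_cases hex : ∃ i j, t.Adj i j ∧ e = s(φ i, φ j)
      · obtain ⟨i, j, hadj, rfl⟩ := hex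
        rw [Finset.mem_image]
        exact ⟨s(i, j), by rwa [SimpleGraph.mem_edgeFinset, SimpleGraph.mem_edgeSet], rfl⟩
      · rw [if_neg hex] at hb
        exact absurd hb (by simp)
    calc _ ≤ (t.edgeFinset.image (Sym2.map φ)).card := Finset.card_le_card hsub
      _ ≤ t.edgeFinset.card := Finset.card_image_le
      _ = ℓ - 1 := by rw [← htedges, SimpleGraph.edgeFinset, Set.ncard_eq_toFinset_card']

lemma AA_lower (hp : 0 ≤ p) (hp1 : p ≤ 1) (htedges : t.edgeSet.ncard = ℓ - 1)
    {S : Finset (Fin n)} (hS : S.card = ℓ) :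
    p ^ (ℓ - 1) * (1 - p) ^ (ℓ * ℓ) ≤ AA t p S := by
  obtain ⟨h, hmem, htrue⟩ := exists_conf htedges hS
  calc p ^ (ℓ - 1) * (1 - p) ^ (ℓ * ℓ) ≤ innerW p S h := innerW_lower hp hp1 S h hS htrue
    _ ≤ AA t p S := Finset.single_le_sum (fun h' _ => innerW_nonneg hp hp1 S h') hmem
end bounds

section main
variable {n ℓ : ℕ} (t : SimpleGraph (Fin ℓ)) (p : ℝ)

noncomputable def Xf (n : ℕ) : (Sym2 (Fin n) → Bool) → ℝ := fun g =>
  ∑ S : Finset (Fin n), if IsCompCopy t (graphOf g) S then 1 else 0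

lemma Xf_eq (g : Sym2 (Fin n) → Bool) :
    (Nat.card {S : Finset (Fin n) // IsCompCopy t (graphOf g) S} : ℝ) = Xf t n g := by
  rw [Nat.card_eq_fintype_card, Fintype.card_subtype, Finset.card_filter, Xf]
  push_cast
  apply Finset.sum_congr rfl
  intro S _
  split <;> norm_num

lemma Xf_nonneg (g : Sym2 (Fin n) → Bool) : 0 ≤ Xf t n g := by
  apply Finset.sum_nonneg
  intro S _
  split <;> norm_num

noncomputable def eY (S : Finset (Fin n)) : ℝ :=
  gnpExp n p (fun g => if IsCompCopy t (graphOf g) S then 1 else 0)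

noncomputable def eYY (S T : Finset (Fin n)) : ℝ :=
  gnpExp n p (fun g => (if IsCompCopy t (graphOf g) S then 1 else 0) *
    (if IsCompCopy t (graphOf g) T then 1 else 0))

variable {t p}

lemma eY_nonneg (hp : 0 ≤ p) (hp1 : p ≤ 1) (S : Finset (Fin n)) : 0 ≤ eY t p S :=
  gnpExp_nonneg hp hp1 (fun g => by split <;> norm_num)

lemma eYY_nonneg (hp : 0 ≤ p) (hp1 : p ≤ 1) (S T : Finset (Fin n)) : 0 ≤ eYY t p S T :=
  gnpExp_nonneg hp hp1 (fun g => by split <;> split <;> norm_num)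

lemma EXf_eq : gnpExp n p (Xf t n) = ∑ S : Finset (Fin n), eY t p S := by
  unfold Xf
  rw [gnpExp_sum]
  rfl

lemma EX2_eq : gnpExp n p (fun g => Xf t n g ^ 2) =
    ∑ S : Finset (Fin n), ∑ T : Finset (Fin n), eYY t p S T := by
  have h1 : (fun g => Xf t n g ^ 2) = fun g => ∑ S : Finset (Fin n), ∑ T : Finset (Fin n),
      (if IsCompCopy t (graphOf g) S then (1:ℝ) else 0) *
        (if IsCompCopy t (graphOf g) T then 1 else 0) := by
    funext g
    rw [Xf, sq, Finset.sum_mul_sum]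
  rw [h1, gnpExp_sum]
  apply Finset.sum_congr rfl
  intro S _
  rw [gnpExp_sum]
  rfl

lemma eYY_diag (S : Finset (Fin n)) : eYY t p S S = eY t p S := by
  rw [eYY, eY]
  congr 1
  funext g
  split <;> norm_num

lemma eYY_overlap (htconn : t.Connected) {S T : Finset (Fin n)} (hne : S ≠ T)
    (hnd : ¬ Disjoint S T) : eYY t p S T = 0 := by
  rw [eYY]
  have : (fun g => (if IsCompCopy t (graphOf g) S then (1:ℝ) else 0) *
      (if IsCompCopy t (graphOf g) T then 1 else 0)) = fun _ => 0 := by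
    funext g
    by_cases hS : IsCompCopy t (graphOf g) S
    · by_cases hT : IsCompCopy t (graphOf g) T
      · exact absurd (comp_eq_of_not_disjoint htconn hS hT hnd) hne
      · rw [if_neg hT, mul_zero]
    · rw [if_neg hS, zero_mul]
  rw [this]
  unfold gnpExp
  simp

lemma eYY_cov (hp : 0 ≤ p) (hp1 : p ≤ 1) {S T : Finset (Fin n)} (hd : Disjoint S T) :
    eYY t p S T ≤ eY t p S * eY t p T + ((ℓ : ℝ) * ℓ) * p * eYY t p S T := by
  have hq0 : (0:ℝ) ≤ 1 - p := by linarith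
  have hAS := AA_nonneg (t := t) hp hp1 S
  have hAT := AA_nonneg (t := t) hp hp1 T
  have heYY : eYY t p S T = AA t p S * AA t p T * (1 - p) ^ (crossSet S ∪ crossSet T).card := by
    rw [eYY]
    have := expYY t p hd
    rw [← this]
  have heYYnn : 0 ≤ eYY t p S T := eYY_nonneg hp hp1 S T
  by_cases hS : (Confs t S).Nonempty
  · by_cases hT : (Confs t T).Nonempty
    · obtain ⟨hs, hsm⟩ := hS
      obtain ⟨ht', htm⟩ := hT
      have hcS : S.card = ℓ := card_eq_of_mem_confs hsm
      have hcT : T.card = ℓ := card_eq_of_mem_confs htm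
      set d := (crossSet S ∩ crossSet T).card with hd_def
      have hdle : (d : ℝ) ≤ (ℓ : ℝ) * ℓ := by
        have h1 := crossSet_inter_card_le hd
        rw [hcS, hcT] at h1
        exact_mod_cast h1
      have hcard : (crossSet S ∪ crossSet T).card + d = (crossSet S).card + (crossSet T).card :=
        Finset.card_union_add_card_inter _ _
      have hsplit : eY t p S * eY t p T = eYY t p S T * (1 - p) ^ d := by
        have hpow : (1 - p) ^ (crossSet S).card * (1 - p) ^ (crossSet T).card =
            (1 - p) ^ (crossSet S ∪ crossSet T).card * (1 - p) ^ d := by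
          rw [← pow_add, ← pow_add, hcard]
        rw [eY, eY, expY, expY, heYY]
        linear_combination AA t p S * AA t p T * hpow
      have hber : 1 - (d : ℝ) * p ≤ (1 - p) ^ d := by
        have h9 := one_add_mul_le_pow (a := -p) (by linarith) d
        have h8 : (1:ℝ) - p = 1 + -p := by ring
        rw [h8]
        linarith
      have h2 : eYY t p S T * (1 - (d : ℝ) * p) ≤ eY t p S * eY t p T := by
        rw [hsplit]
        exact mul_le_mul_of_nonneg_left hber heYYnn
      nlinarith [mul_le_mul_of_nonneg_right hdle (mul_nonneg hp heYYnn)]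
    · have hAT0 : AA t p T = 0 := by rw [AA, Finset.not_nonempty_iff_eq_empty.1 hT, Finset.sum_empty]
      have : eYY t p S T = 0 := by rw [heYY, hAT0]; ring
      rw [this]
      have : eY t p T = AA t p T * (1 - p) ^ (crossSet T).card := by rw [eY, expY]
      rw [this, hAT0]
      have := eY_nonneg (t := t) hp hp1 S
      nlinarith
  · have hAS0 : AA t p S = 0 := by rw [AA, Finset.not_nonempty_iff_eq_empty.1 hS, Finset.sum_empty]
    have : eYY t p S T = 0 := by rw [heYY, hAS0]; ring
    rw [this]
    have : eY t p S = AA t p S * (1 - p) ^ (crossSet S).card := by rw [eY, expY]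
    rw [this, hAS0]
    have := eY_nonneg (t := t) hp hp1 T
    nlinarith
end main

section var
variable {n ℓ : ℕ} {t : SimpleGraph (Fin ℓ)} {p : ℝ}

lemma EX2_le (hp : 0 ≤ p) (hp1 : p ≤ 1) (htconn : t.Connected) :
    gnpExp n p (fun g => Xf t n g ^ 2) ≤ gnpExp n p (Xf t n) + gnpExp n p (Xf t n) ^ 2 +
      ((ℓ : ℝ) * ℓ) * p * gnpExp n p (fun g => Xf t n g ^ 2) := by
  rw [EX2_eq, EXf_eq]
  have key : ∑ S : Finset (Fin n), ∑ T : Finset (Fin n), eYY t p S T ≤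
      ∑ S : Finset (Fin n), ∑ T : Finset (Fin n),
        ((if S = T then eY t p S else 0) + eY t p S * eY t p T +
          ((ℓ : ℝ) * ℓ) * p * eYY t p S T) := by
    apply Finset.sum_le_sum
    intro S _
    apply Finset.sum_le_sum
    intro T _
    by_cases hST : S = T
    · subst hST
      rw [if_pos rfl, eYY_diag]
      have h1 := eY_nonneg (t := t) hp hp1 S
      have h2 : (0:ℝ) ≤ ((ℓ : ℝ) * ℓ) * p :=
        mul_nonneg (mul_nonneg (Nat.cast_nonneg ℓ) (Nat.cast_nonneg ℓ)) hp
      nlinarith [mul_nonneg h1 h1, mul_nonneg h2 h1]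
    · rw [if_neg hST, zero_add]
      by_cases hdisj : Disjoint S T
      · exact eYY_cov hp hp1 hdisj
      · rw [eYY_overlap htconn hST hdisj]
        have h1 := eY_nonneg (t := t) hp hp1 S
        have h2 := eY_nonneg (t := t) hp hp1 T
        nlinarith
  simp only [Finset.sum_add_distrib] at key
  have hA : (∑ S : Finset (Fin n), ∑ T : Finset (Fin n),
      (if S = T then eY t p S else 0)) = ∑ S : Finset (Fin n), eY t p S := by
    apply Finset.sum_congr rfl
    intro S _
    rw [Finset.sum_ite_eq Finset.univ S (fun _ => eY t p S), if_pos (Finset.mem_univ S)]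
  have hB : (∑ S : Finset (Fin n), ∑ T : Finset (Fin n), eY t p S * eY t p T) =
      (∑ S : Finset (Fin n), eY t p S) ^ 2 := by
    rw [sq, Finset.sum_mul_sum]
  have hC : (∑ S : Finset (Fin n), ∑ T : Finset (Fin n), ((ℓ : ℝ) * ℓ) * p * eYY t p S T) =
      ((ℓ : ℝ) * ℓ) * p * ∑ S : Finset (Fin n), ∑ T : Finset (Fin n), eYY t p S T := by
    simp only [← Finset.mul_sum]
  rw [hA, hB, hC] at key
  exact key

lemma gnpExp_var (f : (Sym2 (Fin n) → Bool) → ℝ) :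
    gnpExp n p (fun g => (f g - gnpExp n p f) ^ 2) =
      gnpExp n p (fun g => f g ^ 2) - (gnpExp n p f) ^ 2 := by
  have htot : gnpExp n p (fun _ => (1:ℝ)) = 1 := gnpExp_one
  unfold gnpExp at htot ⊢
  set a := ∑ g : Sym2 (Fin n) → Bool, gnpWeight n p g * f g with ha
  have hpt : ∀ g, gnpWeight n p g * (f g - a) ^ 2 =
      (gnpWeight n p g * f g ^ 2 - 2 * a * (gnpWeight n p g * f g)) +
        a ^ 2 * (gnpWeight n p g * 1) := fun g => by ring
  rw [Finset.sum_congr rfl (fun g _ => hpt g), Finset.sum_add_distrib,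
    Finset.sum_sub_distrib, ← Finset.mul_sum, ← Finset.mul_sum, htot]
  ring
end var

section prob
variable {n ℓ : ℕ} {t : SimpleGraph (Fin ℓ)} {p : ℝ}

lemma gnpExp_const (a : ℝ) : gnpExp n p (fun _ => a) = a := by
  have htot := gnpExp_one (n := n) (p := p)
  unfold gnpExp at htot ⊢
  calc ∑ g : Sym2 (Fin n) → Bool, gnpWeight n p g * a
      = a * ∑ g : Sym2 (Fin n) → Bool, gnpWeight n p g * 1 := by
        rw [Finset.mul_sum]
        exact Finset.sum_congr rfl fun g _ => by ring
    _ = a := by rw [htot, mul_one]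

lemma gnpProb_nonneg (hp : 0 ≤ p) (hp1 : p ≤ 1) (A : (Sym2 (Fin n) → Bool) → Prop) :
    0 ≤ gnpProb n p A := by
  rw [gnpProb]
  exact gnpExp_nonneg hp hp1 fun g => by split <;> norm_num

lemma gnpProb_le_one (hp : 0 ≤ p) (hp1 : p ≤ 1) (A : (Sym2 (Fin n) → Bool) → Prop) :
    gnpProb n p A ≤ 1 := by
  rw [gnpProb]
  calc gnpExp n p (fun g => if A g then (1:ℝ) else 0) ≤ gnpExp n p (fun _ => 1) :=
        gnpExp_mono hp hp1 fun g => by split <;> norm_num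
    _ = 1 := gnpExp_const 1

lemma var_le (hp : 0 ≤ p) (hp1 : p ≤ 1) (hℓp : ((ℓ:ℝ) * ℓ) * p ≤ 1/2)
    (htconn : t.Connected) :
    gnpExp n p (fun g => (Xf t n g - gnpExp n p (Xf t n)) ^ 2) ≤
      2 * gnpExp n p (Xf t n) + 2 * (((ℓ:ℝ) * ℓ) * p) * (gnpExp n p (Xf t n)) ^ 2 := by
  have hvar := gnpExp_var (n := n) (p := p) (Xf t n)
  have hEX2 := EX2_le (n := n) hp hp1 htconn
  have hEXnn : 0 ≤ gnpExp n p (Xf t n) := gnpExp_nonneg hp hp1 (Xf_nonneg t)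
  have hEX2nn : 0 ≤ gnpExp n p (fun g => Xf t n g ^ 2) :=
    gnpExp_nonneg hp hp1 fun g => sq_nonneg _
  have hpnn : 0 ≤ ((ℓ:ℝ) * ℓ) * p :=
    mul_nonneg (mul_nonneg (Nat.cast_nonneg ℓ) (Nat.cast_nonneg ℓ)) hp
  have hB : gnpExp n p (fun g => Xf t n g ^ 2) ≤
      2 * gnpExp n p (Xf t n) + 2 * (gnpExp n p (Xf t n)) ^ 2 := by
    linarith [mul_le_mul_of_nonneg_right hℓp hEX2nn]
  have h2 := mul_le_mul_of_nonneg_left hB hpnn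
  have h3 := mul_le_mul_of_nonneg_right hℓp hEXnn
  linarith

lemma cheb (hp : 0 ≤ p) (hp1 : p ≤ 1) (hℓp : ((ℓ:ℝ) * ℓ) * p ≤ 1/2)
    (htconn : t.Connected) {ε : ℝ} (hε : 0 < ε)
    (hEXpos : 0 < gnpExp n p (Xf t n)) :
    gnpProb n p (fun g => ε < |Xf t n g / gnpExp n p (Xf t n) - 1|) ≤
      2 / (ε ^ 2 * gnpExp n p (Xf t n)) + 2 * (((ℓ:ℝ) * ℓ) * p) / ε ^ 2 := by
  set E := gnpExp n p (Xf t n) with hE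
  have hpt : ∀ g, (if ε < |Xf t n g / E - 1| then (1:ℝ) else 0) ≤
      (1 / (ε ^ 2 * E ^ 2)) * (Xf t n g - E) ^ 2 := by
    intro g
    have hden : 0 < ε ^ 2 * E ^ 2 := by positivity
    split
    · rename_i hevent
      have hEne : E ≠ 0 := ne_of_gt hEXpos
      have hrw : Xf t n g / E - 1 = (Xf t n g - E) / E := by field_simp
      rw [hrw, abs_div, abs_of_pos hEXpos] at hevent
      have h1 : ε * E < |Xf t n g - E| := (lt_div_iff₀ hEXpos).1 hevent
      have h2 : (ε * E) ^ 2 ≤ (Xf t n g - E) ^ 2 := by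
        have h0 : 0 ≤ ε * E := by positivity
        calc (ε * E) ^ 2 ≤ |Xf t n g - E| ^ 2 := by
              apply pow_le_pow_left₀ h0 h1.le
          _ = (Xf t n g - E) ^ 2 := sq_abs _
      rw [one_div, inv_mul_eq_div, le_div_iff₀ hden]
      calc (1:ℝ) * (ε ^ 2 * E ^ 2) = (ε * E) ^ 2 := by ring
        _ ≤ _ := h2
    · positivity
  calc gnpProb n p (fun g => ε < |Xf t n g / E - 1|) ≤
        gnpExp n p (fun g => (1 / (ε ^ 2 * E ^ 2)) * (Xf t n g - E) ^ 2) :=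
      gnpExp_mono hp hp1 hpt
    _ = (1 / (ε ^ 2 * E ^ 2)) * gnpExp n p (fun g => (Xf t n g - E) ^ 2) := gnpExp_smul _ _
    _ ≤ (1 / (ε ^ 2 * E ^ 2)) * (2 * E + 2 * (((ℓ:ℝ) * ℓ) * p) * E ^ 2) := by
        apply mul_le_mul_of_nonneg_left _ (by positivity)
        exact var_le hp hp1 hℓp htconn
    _ = 2 / (ε ^ 2 * E) + 2 * (((ℓ:ℝ) * ℓ) * p) / ε ^ 2 := by
        field_simp
end prob

section lb
variable {n ℓ : ℕ} {t : SimpleGraph (Fin ℓ)}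

lemma exp_neg_two_le {p : ℝ} (hp : 0 ≤ p) (hp2 : p ≤ 1/2) :
    Real.exp (-(2*p)) ≤ 1 - p := by
  have h1 := Real.add_one_le_exp (2*p)
  have h3 : (0:ℝ) < 1 + 2*p := by linarith
  rw [Real.exp_neg]
  calc (Real.exp (2*p))⁻¹ ≤ (1 + 2*p)⁻¹ := by
        apply inv_anti₀ h3
        linarith
    _ ≤ 1 - p := by
        rw [← one_div]
        rw [div_le_iff₀ h3]
        nlinarith
    
lemma exp_le_pow {p : ℝ} (hp : 0 ≤ p) (hp2 : p ≤ 1/2) (m : ℕ) :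
    Real.exp (-(2*p*m)) ≤ (1-p)^m := by
  have h1 : Real.exp (-(2*p*m)) = (Real.exp (-(2*p)))^m := by
    rw [← Real.exp_nat_mul]
    congr 1
    ring
  rw [h1]
  exact pow_le_pow_left₀ (Real.exp_pos _).le (exp_neg_two_le hp hp2) m

lemma EX_lb (hℓ : 1 ≤ ℓ) (htedges : t.edgeSet.ncard = ℓ - 1) {c : ℝ} (hc : 0 < c)
    (hn : 2*ℓ ≤ n) (hcn : 2*c ≤ n) :
    (c^(ℓ-1) * Real.exp (-(2*c*((ℓ:ℝ)*ℓ+ℓ))) / (2^ℓ * (Nat.factorial ℓ))) * n ≤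
      gnpExp n (c/n) (Xf t n) := by
  have hn0 : 0 < n := by omega
  have hn0' : (0:ℝ) < n := by exact_mod_cast hn0
  set p := c/n with hpdef
  have hp : 0 ≤ p := by positivity
  have hp2 : p ≤ 1/2 := by
    rw [hpdef, div_le_iff₀ hn0']
    linarith
  have hp1 : p ≤ 1 := by linarith
  have hq0 : (0:ℝ) ≤ 1 - p := by linarith
  have hq1 : 1 - p ≤ 1 := by linarith
  -- per-set bound
  have step1 : ∀ S : Finset (Fin n), S.card = ℓ →
      p^(ℓ-1) * (1-p)^(ℓ*ℓ + ℓ*n) ≤ eY t p S := by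
    intro S hS
    have h1 : eY t p S = AA t p S * (1-p)^(crossSet S).card := by rw [eY, expY]
    rw [h1, pow_add, ← mul_assoc]
    apply mul_le_mul
    · exact AA_lower hp hp1 htedges hS
    · apply pow_le_pow_of_le_one hq0 hq1
      have := crossSet_card_le S
      rwa [hS] at this
    · positivity
    · exact AA_nonneg hp hp1 S
  -- sum bound
  have step2 : ((n.choose ℓ : ℝ)) * (p^(ℓ-1) * (1-p)^(ℓ*ℓ + ℓ*n)) ≤
      gnpExp n p (Xf t n) := by
    rw [EXf_eq]
    calc ((n.choose ℓ : ℝ)) * (p^(ℓ-1) * (1-p)^(ℓ*ℓ + ℓ*n))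
        = (Finset.powersetCard ℓ (Finset.univ : Finset (Fin n))).card •
            (p^(ℓ-1) * (1-p)^(ℓ*ℓ + ℓ*n)) := by
          rw [Finset.card_powersetCard, Finset.card_univ, Fintype.card_fin, nsmul_eq_mul]
      _ ≤ ∑ S ∈ Finset.powersetCard ℓ (Finset.univ : Finset (Fin n)), eY t p S := by
          apply Finset.card_nsmul_le_sum
          intro S hS
          exact step1 S (Finset.mem_powersetCard_univ.1 hS)
      _ ≤ ∑ S : Finset (Fin n), eY t p S := by
          apply Finset.sum_le_sum_of_subset_of_nonneg (Finset.subset_univ _)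
          intro S _ _
          exact eY_nonneg hp hp1 S
  -- numeric bounds
  have hcast : (n:ℝ)/2 ≤ ((n + 1 - ℓ : ℕ) : ℝ) := by
    rw [Nat.cast_sub (by omega)]
    push_cast
    have h2 : ((2*ℓ : ℕ):ℝ) ≤ ((n:ℕ):ℝ) := by exact_mod_cast hn
    push_cast at h2
    linarith
  have hchoose : ((n:ℝ)/2)^ℓ / (Nat.factorial ℓ) ≤ (n.choose ℓ : ℝ) := by
    calc ((n:ℝ)/2)^ℓ / (Nat.factorial ℓ)
        ≤ (((n + 1 - ℓ : ℕ) : ℝ))^ℓ / (Nat.factorial ℓ) := by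
          gcongr
      _ ≤ (n.choose ℓ : ℝ) := Nat.pow_le_choose ℓ n
  have hqbound : Real.exp (-(2*c*((ℓ:ℝ)*ℓ+ℓ))) ≤ (1-p)^(ℓ*ℓ + ℓ*n) := by
    refine le_trans (Real.exp_le_exp.2 ?_) (exp_le_pow hp hp2 (ℓ*ℓ + ℓ*n))
    have hm : ((ℓ*ℓ + ℓ*n : ℕ):ℝ) = (ℓ:ℝ)*ℓ + (ℓ:ℝ)*n := by push_cast; ring
    rw [hm, hpdef, neg_le_neg_iff]
    have hexp : (c/n)*((ℓ:ℝ)*ℓ + (ℓ:ℝ)*n) = c*(ℓ:ℝ)*(ℓ:ℝ)/n + c*(ℓ:ℝ) := by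
      field_simp
    have hn1 : (1:ℝ) ≤ n := by exact_mod_cast hn0
    have hdivle : c*(ℓ:ℝ)*(ℓ:ℝ)/n ≤ c*(ℓ:ℝ)*(ℓ:ℝ) := by
      apply div_le_self (by positivity) hn1
    nlinarith [hexp]
  -- assembly
  set E0 := Real.exp (-(2*c*((ℓ:ℝ)*ℓ+ℓ))) with hE0
  have hE0pos : 0 < E0 := Real.exp_pos _
  have heq : (c^(ℓ-1) * E0 / (2^ℓ * (Nat.factorial ℓ))) * n =
      ((n:ℝ)/2)^ℓ / (Nat.factorial ℓ) * ((c/n)^(ℓ-1) * E0) := by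
    have hℓeq : ℓ = (ℓ - 1) + 1 := by omega
    have hnpow : (n:ℝ)^ℓ = (n:ℝ)^(ℓ-1) * n := by
      conv_lhs => rw [hℓeq]
      rw [pow_succ]
    field_simp
    rw [div_pow, div_pow, hnpow]
    field_simp
  calc (c^(ℓ-1) * E0 / (2^ℓ * (Nat.factorial ℓ))) * n
      = ((n:ℝ)/2)^ℓ / (Nat.factorial ℓ) * ((c/n)^(ℓ-1) * E0) := heq
    _ ≤ (n.choose ℓ : ℝ) * (p^(ℓ-1) * (1-p)^(ℓ*ℓ + ℓ*n)) := by
        apply mul_le_mul hchoose ?_ ?_ ?_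
        · rw [hpdef]
          exact mul_le_mul_of_nonneg_left hqbound (by positivity)
        · positivity
        · positivity
    _ ≤ gnpExp n p (Xf t n) := step2
end lb

section final
variable {n ℓ : ℕ} {t : SimpleGraph (Fin ℓ)} {p : ℝ}

lemma gnpExp_sub (f h : (Sym2 (Fin n) → Bool) → ℝ) :
    gnpExp n p (fun g => f g - h g) = gnpExp n p f - gnpExp n p h := by
  unfold gnpExp
  rw [← Finset.sum_sub_distrib]
  exact Finset.sum_congr rfl fun g _ => by ring

lemma prob_ge (hp : 0 ≤ p) (hp1 : p ≤ 1) {k : ℕ}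
    (hEXpos : 0 < gnpExp n p (Xf t n))
    (hk : 2*(k:ℝ) ≤ gnpExp n p (Xf t n)) :
    1 - gnpProb n p (fun g => (1:ℝ)/2 < |Xf t n g / gnpExp n p (Xf t n) - 1|) ≤
      gnpProb n p (fun g => (k:ℝ) ≤ Xf t n g) := by
  set E := gnpExp n p (Xf t n) with hE
  have key : ∀ g, (1:ℝ) - (if (1:ℝ)/2 < |Xf t n g / E - 1| then (1:ℝ) else 0) ≤
      (if (k:ℝ) ≤ Xf t n g then (1:ℝ) else 0) := by
    intro g
    by_cases hA : (k:ℝ) ≤ Xf t n g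
    · rw [if_pos hA]
      split <;> norm_num
    · rw [if_neg hA]
      push_neg at hA
      have hX0 : 0 ≤ Xf t n g := Xf_nonneg t g
      have hB : (1:ℝ)/2 < |Xf t n g / E - 1| := by
        have hrw : Xf t n g / E - 1 = (Xf t n g - E) / E := by
          field_simp
        rw [hrw, abs_div, abs_of_pos hEXpos, lt_div_iff₀ hEXpos]
        have : E - Xf t n g ≤ |Xf t n g - E| := by
          rw [abs_sub_comm]
          exact le_abs_self _
        linarith
      rw [if_pos hB]
      norm_num
  have h1 : gnpExp n p (fun g => (1:ℝ) -
      (if (1:ℝ)/2 < |Xf t n g / E - 1| then (1:ℝ) else 0)) =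
      1 - gnpProb n p (fun g => (1:ℝ)/2 < |Xf t n g / E - 1|) := by
    rw [gnpExp_sub (fun _ => (1:ℝ)), gnpExp_const]
    rfl
  calc 1 - gnpProb n p (fun g => (1:ℝ)/2 < |Xf t n g / E - 1|)
      = gnpExp n p (fun g => (1:ℝ) -
          (if (1:ℝ)/2 < |Xf t n g / E - 1| then (1:ℝ) else 0)) := h1.symm
    _ ≤ gnpExp n p (fun g => if (k:ℝ) ≤ Xf t n g then (1:ℝ) else 0) :=
        gnpExp_mono hp hp1 key
    _ = gnpProb n p (fun g => (k:ℝ) ≤ Xf t n g) := rfl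

noncomputable def dlt (ℓ : ℕ) (c : ℝ) : ℝ :=
  c^(ℓ-1) * Real.exp (-(2*c*((ℓ:ℝ)*ℓ+ℓ))) / (2^ℓ * (Nat.factorial ℓ))

lemma dlt_pos {c : ℝ} (hc : 0 < c) : 0 < dlt ℓ c := by
  rw [dlt]
  have : (0:ℝ) < (Nat.factorial ℓ : ℝ) := by exact_mod_cast Nat.factorial_pos ℓ
  positivity

lemma part1_bound (hℓ : 1 ≤ ℓ) (htconn : t.Connected) (htedges : t.edgeSet.ncard = ℓ - 1)
    {c : ℝ} (hc : 0 < c) {ε : ℝ} (hε : 0 < ε)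
    (hn1 : 2*ℓ ≤ n) (hn2 : 2*c ≤ (n:ℝ)) (hn3 : 2*((ℓ:ℝ)*ℓ)*c ≤ (n:ℝ)) :
    gnpProb n (c/n) (fun g => ε < |Xf t n g / gnpExp n (c/n) (Xf t n) - 1|) ≤
      (2/(ε^2 * dlt ℓ c) + 2*((ℓ:ℝ)*ℓ)*c/ε^2) / n := by
  have hn0 : 0 < n := by omega
  have hn0' : (0:ℝ) < n := by exact_mod_cast hn0
  set p := c/(n:ℝ) with hpdef
  have hp : 0 ≤ p := by positivity
  have hp2 : p ≤ 1/2 := by rw [hpdef, div_le_iff₀ hn0']; linarith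
  have hp1 : p ≤ 1 := by linarith
  have hℓℓ : (0:ℝ) ≤ (ℓ:ℝ)*ℓ := by positivity
  have hℓp : ((ℓ:ℝ)*ℓ)*p ≤ 1/2 := by
    have hrw : ((ℓ:ℝ)*ℓ)*p = (((ℓ:ℝ)*ℓ)*c)/n := by rw [hpdef]; ring
    rw [hrw, div_le_iff₀ hn0']
    linarith
  have hEXlb : dlt ℓ c * n ≤ gnpExp n p (Xf t n) := by
    rw [dlt]
    exact EX_lb hℓ htedges hc hn1 hn2
  have hEXpos : 0 < gnpExp n p (Xf t n) :=
    lt_of_lt_of_le (mul_pos (dlt_pos hc) hn0') hEXlb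
  calc gnpProb n p (fun g => ε < |Xf t n g / gnpExp n p (Xf t n) - 1|) ≤
        2 / (ε ^ 2 * gnpExp n p (Xf t n)) + 2 * (((ℓ:ℝ) * ℓ) * p) / ε ^ 2 :=
      cheb hp hp1 hℓp htconn hε hEXpos
    _ ≤ 2 / (ε ^ 2 * (dlt ℓ c * n)) + 2 * (((ℓ:ℝ) * ℓ) * p) / ε ^ 2 := by
        have hd := dlt_pos (ℓ := ℓ) hc
        have hdn : 0 < dlt ℓ c * n := mul_pos hd hn0'
        gcongr
    _ = (2/(ε^2 * dlt ℓ c) + 2*((ℓ:ℝ)*ℓ)*c/ε^2) / n := by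
        rw [hpdef]
        have hd := dlt_pos (ℓ := ℓ) hc
        field_simp
end final

section final2
variable {n ℓ : ℕ} {t : SimpleGraph (Fin ℓ)}

lemma part2_bound (hℓ : 1 ≤ ℓ) (htconn : t.Connected) (htedges : t.edgeSet.ncard = ℓ - 1)
    {c : ℝ} (hc : 0 < c) (k : ℕ)
    (hn1 : 2*ℓ ≤ n) (hn2 : 2*c ≤ (n:ℝ)) (hn3 : 2*((ℓ:ℝ)*ℓ)*c ≤ (n:ℝ))
    (hk : 2*(k:ℝ) ≤ dlt ℓ c * n) :
    1 - (2/(((1:ℝ)/2)^2 * dlt ℓ c) + 2*((ℓ:ℝ)*ℓ)*c/((1:ℝ)/2)^2) / n ≤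
      gnpProb n (c/n) (fun g => (k:ℝ) ≤ Xf t n g) := by
  have hn0 : 0 < n := by omega
  have hn0' : (0:ℝ) < n := by exact_mod_cast hn0
  set p := c/(n:ℝ) with hpdef
  have hp : 0 ≤ p := by positivity
  have hp2 : p ≤ 1/2 := by rw [hpdef, div_le_iff₀ hn0']; linarith
  have hp1 : p ≤ 1 := by linarith
  have hEXlb : dlt ℓ c * n ≤ gnpExp n p (Xf t n) := by
    rw [dlt]
    exact EX_lb hℓ htedges hc hn1 hn2
  have hEXpos : 0 < gnpExp n p (Xf t n) :=
    lt_of_lt_of_le (mul_pos (dlt_pos hc) hn0') hEXlb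
  have hP := part1_bound (t := t) hℓ htconn htedges hc (by norm_num : (0:ℝ) < 1/2) hn1 hn2 hn3
  have hge := prob_ge (t := t) hp hp1 hEXpos (le_trans hk hEXlb) (k := k)
  linarith
end final2


/-- for a fixed tree `t` and `c > 0`, the number of components of
`G(n, c/n)` isomorphic to `t`, divided by its expectation, converges to `1` in
probability; in particular, for every fixed `k`, with probability tending to `1`
the graph contains at least `k` components isomorphic to `t`. -/
theorem gnp_tree_components_concentration (ℓ : ℕ) (hℓ : 1 ≤ ℓ)
    (t : SimpleGraph (Fin ℓ)) (htconn : t.Connected) (htedges : t.edgeSet.ncard = ℓ - 1)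
    (c : ℝ) (hc : 0 < c) :
    (∀ ε : ℝ, 0 < ε →
      Tendsto (fun n : ℕ =>
          gnpProb n (c / n) (fun g =>
            ε < |(Nat.card {S : Finset (Fin n) // IsCompCopy t (graphOf g) S} : ℝ) /
                  gnpExp n (c / n)
                    (fun g' => (Nat.card {S : Finset (Fin n) // IsCompCopy t (graphOf g') S} : ℝ))
                - 1|))
        atTop (𝓝 0)) ∧
    (∀ k : ℕ,
      Tendsto (fun n : ℕ =>
          gnpProb n (c / n) (fun g =>
            k ≤ Nat.card {S : Finset (Fin n) // IsCompCopy t (graphOf g) S}))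
        atTop (𝓝 1)) := by
  have hcnat : Tendsto (fun n : ℕ => (n : ℝ)) atTop atTop := tendsto_natCast_atTop_atTop
  have hEfix : ∀ n : ℕ, gnpExp n (c / n)
      (fun g' => (Nat.card {S : Finset (Fin n) // IsCompCopy t (graphOf g') S} : ℝ)) =
      gnpExp n (c / n) (Xf t n) := by
    intro n
    congr 1
    funext g
    exact Xf_eq t g
  constructor
  · intro ε hε
    have hre : (fun n : ℕ => gnpProb n (c / n) (fun g =>
        ε < |(Nat.card {S : Finset (Fin n) // IsCompCopy t (graphOf g) S} : ℝ) /
          gnpExp n (c / n)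
            (fun g' => (Nat.card {S : Finset (Fin n) // IsCompCopy t (graphOf g') S} : ℝ)) - 1|)) =
        fun n : ℕ => gnpProb n (c / n)
          (fun g => ε < |Xf t n g / gnpExp n (c / n) (Xf t n) - 1|) := by
      funext n
      congr 1
      funext g
      rw [Xf_eq t g, hEfix n]
    rw [hre]
    apply squeeze_zero' ?_ ?_ (tendsto_const_div_atTop_nhds_zero_nat
      (2/(ε^2 * dlt ℓ c) + 2*((ℓ:ℝ)*ℓ)*c/ε^2))
    · filter_upwards [eventually_ge_atTop 1, hcnat.eventually_ge_atTop (2*c)]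
        with n hn1 hn2
      have hn0' : (0:ℝ) < n := by exact_mod_cast hn1
      apply gnpProb_nonneg (by positivity)
      rw [div_le_one hn0']
      linarith
    · filter_upwards [eventually_ge_atTop (2*ℓ), hcnat.eventually_ge_atTop (2*c),
        hcnat.eventually_ge_atTop (2*((ℓ:ℝ)*ℓ)*c)] with n hn1 hn2 hn3
      exact part1_bound hℓ htconn htedges hc hε hn1 hn2 hn3
  · intro k
    have hre : (fun n : ℕ => gnpProb n (c / n) (fun g =>
        k ≤ Nat.card {S : Finset (Fin n) // IsCompCopy t (graphOf g) S})) =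
        fun n : ℕ => gnpProb n (c / n) (fun g => (k:ℝ) ≤ Xf t n g) := by
      funext n
      congr 1
      funext g
      rw [eq_iff_iff, ← Xf_eq t g]
      exact Nat.cast_le.symm
    rw [hre]
    set C := 2/(((1:ℝ)/2)^2 * dlt ℓ c) + 2*((ℓ:ℝ)*ℓ)*c/((1:ℝ)/2)^2 with hC
    have hlim : Tendsto (fun n : ℕ => 1 - C / n) atTop (𝓝 1) := by
      have := (tendsto_const_div_atTop_nhds_zero_nat C).const_sub 1
      simpa using this
    apply tendsto_of_tendsto_of_tendsto_of_le_of_le' hlim tendsto_const_nhds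
    · filter_upwards [eventually_ge_atTop (2*ℓ), hcnat.eventually_ge_atTop (2*c),
        hcnat.eventually_ge_atTop (2*((ℓ:ℝ)*ℓ)*c),
        hcnat.eventually_ge_atTop (2*(k:ℝ)/dlt ℓ c)] with n hn1 hn2 hn3 hn4
      have hk : 2*(k:ℝ) ≤ dlt ℓ c * n := by
        rw [div_le_iff₀ (dlt_pos hc)] at hn4
        linarith [hn4]
      exact part2_bound hℓ htconn htedges hc k hn1 hn2 hn3 hk
    · filter_upwards [eventually_ge_atTop 1, hcnat.eventually_ge_atTop (2*c)]
        with n hn1 hn2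
      have hn0' : (0:ℝ) < n := by exact_mod_cast hn1
      apply gnpProb_le_one (by positivity)
      rw [div_le_one hn0']
      linarith
end

section
/- Let T₁, T₂ be two rooted trees with roots φ₁, φ₂ having the same (m,k)-type. Then Duplicator wins the k-round distance-preserving Ehrenfeucht game DEHR[T₁|_m, T₂|_m, k] with designated pair (φ₁, φ₂): for every strategy of Spoiler selecting at most k vertices alternately from the truncated trees, Duplicator can respond so that the resulting pairs (including (φ₁,φ₂)) preserve parenthood, distances, and equality. -/
/-- An abstract rooted tree: a root together with the list of its principal branches. -/
inductive RTree : Type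
  | node : List RTree → RTree

/-- `TreeType m k` is the set `Σ_{m,k}` of `(m,k)`-tree-types. -/
def TreeType : ℕ → ℕ → Type
  | 0, _ => Unit
  | (m+1), k => TreeType m k → Fin (k+1)

/-- `trunc m T` is the truncation `T|_m` of `T` to depth `m`. -/
def trunc : ℕ → RTree → RTree
  | 0, _ => .node []
  | (m+1), .node cs => .node (cs.map (trunc m))

open Classical in
/-- The `(m,k)`-type of a rooted tree. -/
noncomputable def typeOf : (m : ℕ) → (k : ℕ) → RTree → TreeType m k
  | 0, _, _ => ()
  | (m+1), k, .node cs => fun σ =>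
      ⟨min (cs.countP (fun c => decide (typeOf m k c = σ))) k,
        Nat.lt_succ_of_le (Nat.min_le_right _ _)⟩

/-- `l` is (the address of) a vertex of the rooted tree `T`: the root is `[]`, and
`i :: l` is a vertex if `i` indexes a principal branch containing the vertex `l`. -/
def isVertex : List ℕ → RTree → Prop
  | [], _ => True
  | (i :: l), .node cs => ∃ h : i < cs.length, isVertex l (cs.get ⟨i, h⟩)

/-- The vertices of a rooted tree. -/
def Vtx (T : RTree) : Type := {l : List ℕ // isVertex l T}

/-- The root of a rooted tree. -/
def root (T : RTree) : Vtx T := ⟨[], trivial⟩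

/-- `isParent u v` : the vertex `v` is the parent `π(u)` of the vertex `u`. -/
def isParent {T : RTree} (u v : Vtx T) : Prop :=
  u.1 ≠ [] ∧ v.1 = u.1.dropLast

/-- Length of the longest common prefix of two vertex addresses. -/
def cpl : List ℕ → List ℕ → ℕ
  | (a :: as), (b :: bs) => if a = b then cpl as bs + 1 else 0
  | _, _ => 0

/-- The tree distance between two vertices (given by their addresses). -/
def treeDist (u v : List ℕ) : ℕ :=
  u.length + v.length - 2 * cpl u v

/-- The winning conditions of the distance-preserving Ehrenfeucht game, on the
configuration `C` of selected pairs: parenthood, distances and equality are preserved. -/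
def DEHRok {V₁ V₂ : Type} (par₁ : V₁ → V₁ → Prop) (par₂ : V₂ → V₂ → Prop)
    (d₁ : V₁ → V₁ → ℕ) (d₂ : V₂ → V₂ → ℕ) (C : List (V₁ × V₂)) : Prop :=
  ∀ p ∈ C, ∀ q ∈ C,
    (par₁ p.1 q.1 ↔ par₂ p.2 q.2) ∧ d₁ p.1 q.1 = d₂ p.2 q.2 ∧ (p.1 = q.1 ↔ p.2 = q.2)

/-- Duplicator wins the `r`-round distance-preserving Ehrenfeucht game with designated
pairs `C`: the configuration is winning, and for each of `r` rounds, whatever vertex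
Spoiler picks in either structure, Duplicator can answer in the other keeping a
winnable configuration. -/
def DEHRWin {V₁ V₂ : Type} (par₁ : V₁ → V₁ → Prop) (par₂ : V₂ → V₂ → Prop)
    (d₁ : V₁ → V₁ → ℕ) (d₂ : V₂ → V₂ → ℕ) : ℕ → List (V₁ × V₂) → Prop
  | 0, C => DEHRok par₁ par₂ d₁ d₂ C
  | (r+1), C => DEHRok par₁ par₂ d₁ d₂ C ∧
      (∀ x : V₁, ∃ y : V₂, DEHRWin par₁ par₂ d₁ d₂ r ((x, y) :: C)) ∧
      (∀ y : V₂, ∃ x : V₁, DEHRWin par₁ par₂ d₁ d₂ r ((x, y) :: C))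

namespace DehrAux


lemma cpl_nil_left (x : List ℕ) : cpl [] x = 0 := by cases x <;> rfl
lemma cpl_nil_right (x : List ℕ) : cpl x [] = 0 := by cases x <;> rfl

lemma cpl_comm : ∀ x y : List ℕ, cpl x y = cpl y x := by
  intro x
  induction x with
  | nil => intro y; rw [cpl_nil_left, cpl_nil_right]
  | cons a as ih =>
    intro y
    cases y with
    | nil => rw [cpl_nil_left, cpl_nil_right]
    | cons b bs =>
      show (if a = b then cpl as bs + 1 else 0) = (if b = a then cpl bs as + 1 else 0)
      by_cases h : a = b
      · simp [h, ih]
      · simp [h, Ne.symm h]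

lemma cpl_self (x : List ℕ) : cpl x x = x.length := by
  induction x with
  | nil => rfl
  | cons a as ih => show (if a = a then cpl as as + 1 else 0) = as.length + 1; simp [ih]

lemma cpl_le_left : ∀ x y : List ℕ, cpl x y ≤ x.length := by
  intro x
  induction x with
  | nil => intro y; rw [cpl_nil_left]; exact Nat.zero_le _
  | cons a as ih =>
    intro y
    cases y with
    | nil => rw [cpl_nil_right]; exact Nat.zero_le _
    | cons b bs =>
      show (if a = b then cpl as bs + 1 else 0) ≤ as.length + 1
      by_cases h : a = b
      · simp [h]; exact ih bs
      · simp [h]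

lemma cpl_append_append : ∀ (p s t : List ℕ), cpl (p ++ s) (p ++ t) = p.length + cpl s t := by
  intro p
  induction p with
  | nil => intro s t; simp
  | cons a as ih =>
    intro s t
    show (if a = a then cpl (as ++ s) (as ++ t) + 1 else 0) = as.length + 1 + cpl s t
    simp [ih]; omega

lemma cpl_prefix_left {x y : List ℕ} (h : x <+: y) : cpl x y = x.length := by
  obtain ⟨t, rfl⟩ := h
  have := cpl_append_append x [] t
  simpa [cpl_nil_left] using this

lemma cpl_stable : ∀ (p a : List ℕ), cpl p a < p.length → ∀ s, cpl (p ++ s) a = cpl p a := by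
  intro p
  induction p with
  | nil => intro a h; simp [cpl_nil_left] at h
  | cons x xs ih =>
    intro a h s
    cases a with
    | nil => rw [cpl_nil_right, cpl_nil_right]
    | cons b bs =>
      by_cases hxb : x = b
      · have h' : cpl xs bs < xs.length := by
          have : cpl (x :: xs) (b :: bs) = cpl xs bs + 1 := by simp [cpl, hxb]
          rw [this] at h; simpa using h
        show (if x = b then cpl (xs ++ s) bs + 1 else 0) = (if x = b then cpl xs bs + 1 else 0)
        simp [hxb, ih bs h' s]
      · show (if x = b then cpl (xs ++ s) bs + 1 else 0) = (if x = b then cpl xs bs + 1 else 0)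
        simp [hxb]

lemma prefix_of_cpl : ∀ (p a : List ℕ), cpl p a = p.length → p <+: a := by
  intro p
  induction p with
  | nil => intro a _; exact List.nil_prefix
  | cons x xs ih =>
    intro a h
    cases a with
    | nil => rw [cpl_nil_right] at h; simp at h
    | cons b bs =>
      by_cases hxb : x = b
      · subst hxb
        have : cpl xs bs = xs.length := by
          have : cpl (x :: xs) (x :: bs) = cpl xs bs + 1 := by simp [cpl]
          rw [this] at h; simpa using h
        obtain ⟨t, rfl⟩ := ih bs this
        exact ⟨t, rfl⟩
      · exfalso
        have : cpl (x :: xs) (b :: bs) = 0 := by simp [cpl, hxb]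
        rw [this] at h; simp at h

lemma eq_iff_cpl {x y : List ℕ} : x = y ↔ (x.length = y.length ∧ cpl x y = x.length) := by
  constructor
  · rintro rfl; exact ⟨rfl, cpl_self x⟩
  · rintro ⟨h1, h2⟩
    exact (prefix_of_cpl x y h2).eq_of_length h1

lemma parent_iff {x y : List ℕ} :
    (x ≠ [] ∧ y = x.dropLast) ↔ (y.length + 1 = x.length ∧ cpl x y = y.length) := by
  constructor
  · rintro ⟨hne, rfl⟩
    have hx : x.length ≠ 0 := by simpa using hne
    constructor
    · rw [List.length_dropLast]; omega
    · rw [cpl_comm]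
      exact cpl_prefix_left (List.dropLast_prefix x)
  · rintro ⟨hlen, hcpl⟩
    have hpre : y <+: x := prefix_of_cpl y x (by rw [cpl_comm]; exact hcpl)
    have hne : x ≠ [] := by intro h; subst h; simp at hlen
    refine ⟨hne, ?_⟩
    rw [List.prefix_iff_eq_take] at hpre
    rw [hpre, List.dropLast_eq_take]
    congr 1
    omega



def kids : RTree → List RTree
  | .node cs => cs

def sub? : List ℕ → RTree → Option RTree
  | [], T => some T
  | (i :: l), T =>
    match (kids T)[i]? with
    | some c => sub? l c
    | none => none

lemma sub?_nil (T : RTree) : sub? [] T = some T := rfl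

lemma sub?_cons (i : ℕ) (l : List ℕ) (T : RTree) :
    sub? (i :: l) T = match (kids T)[i]? with
      | some c => sub? l c
      | none => none := rfl

lemma sub?_append : ∀ (p q : List ℕ) (T : RTree),
    sub? (p ++ q) T = (sub? p T).bind (sub? q) := by
  intro p
  induction p with
  | nil => intro q T; rfl
  | cons i l ih =>
    intro q T
    rw [List.cons_append, sub?_cons, sub?_cons]
    cases h : (kids T)[i]? with
    | none => rfl
    | some c => exact ih q c

lemma sub?_singleton (i : ℕ) (T : RTree) : sub? [i] T = (kids T)[i]? := by
  rw [sub?_cons]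
  cases h : (kids T)[i]? <;> rfl

lemma isVertex_iff_sub? : ∀ (l : List ℕ) (T : RTree), isVertex l T ↔ (sub? l T).isSome := by
  intro l
  induction l with
  | nil => intro T; simp [isVertex, sub?_nil]
  | cons i l ih =>
    intro T
    cases T with
    | node cs =>
      show (∃ h : i < cs.length, isVertex l (cs.get ⟨i, h⟩)) ↔ _
      rw [sub?_cons]
      constructor
      · rintro ⟨h, hv⟩
        have : (kids (RTree.node cs))[i]? = some (cs.get ⟨i, h⟩) := by
          show cs[i]? = _
          rw [List.getElem?_eq_getElem h]; rfl
        rw [this]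
        exact (ih _).mp hv
      · intro h
        cases hk : (kids (RTree.node cs))[i]? with
        | none => rw [hk] at h; simp at h
        | some c =>
          rw [hk] at h
          have hlt : i < cs.length := by
            by_contra hge
            have : cs[i]? = none := List.getElem?_eq_none (by omega)
            exact absurd (hk.symm.trans this) (by simp)
          refine ⟨hlt, (ih _).mpr ?_⟩
          have : cs[i]? = some (cs.get ⟨i, hlt⟩) := by rw [List.getElem?_eq_getElem hlt]; rfl
          have hc : c = cs.get ⟨i, hlt⟩ := by
            have := (hk.symm.trans this)
            simpa using this
          rwa [← hc]

lemma isVertex_trunc : ∀ (l : List ℕ) (m : ℕ) (T : RTree),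
    isVertex l (trunc m T) ↔ l.length ≤ m ∧ (sub? l T).isSome := by
  intro l
  induction l with
  | nil => intro m T; simp [isVertex, sub?_nil]
  | cons i l ih =>
    intro m T
    cases m with
    | zero =>
      constructor
      · rintro ⟨h, -⟩; exact absurd h (by simp [trunc, kids])
      · rintro ⟨h, -⟩; simp at h
    | succ m =>
      cases T with
      | node cs =>
        show (∃ h : i < (cs.map (trunc m)).length, _) ↔ _
        constructor
        · rintro ⟨h, hv⟩
          rw [List.length_map] at h
          have hget : (cs.map (trunc m)).get ⟨i, by simpa using h⟩ = trunc m (cs.get ⟨i, h⟩) := by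
            simp
          rw [hget] at hv
          rw [ih] at hv
          refine ⟨by simpa using Nat.succ_le_succ hv.1, ?_⟩
          rw [sub?_cons]
          have : (kids (RTree.node cs))[i]? = some (cs.get ⟨i, h⟩) := by
            show cs[i]? = _; rw [List.getElem?_eq_getElem h]; rfl
          rw [this]
          exact hv.2
        · rintro ⟨hlen, hsome⟩
          rw [sub?_cons] at hsome
          cases hk : (kids (RTree.node cs))[i]? with
          | none => rw [hk] at hsome; simp at hsome
          | some c =>
            rw [hk] at hsome
            have hlt : i < cs.length := by
              by_contra hge
              have : cs[i]? = none := List.getElem?_eq_none (by omega)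
              exact absurd (hk.symm.trans this) (by simp)
            refine ⟨by simpa using hlt, ?_⟩
            have hget : (cs.map (trunc m)).get ⟨i, by simpa using hlt⟩ = trunc m (cs.get ⟨i, hlt⟩) := by
              simp
            rw [hget, ih]
            have hc : c = cs.get ⟨i, hlt⟩ := by
              have : cs[i]? = some (cs.get ⟨i, hlt⟩) := by rw [List.getElem?_eq_getElem hlt]; rfl
              simpa using hk.symm.trans this
            exact ⟨by simpa using Nat.le_of_succ_le_succ hlen, by rw [← hc]; exact hsome⟩



lemma countP_eq_card_filter_range {α : Type*} (l : List α) (p : α → Bool) (d : α) :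
    l.countP p = ((Finset.range l.length).filter (fun i => p (l.getD i d))).card := by
  induction l with
  | nil => simp
  | cons c cs ih =>
    rw [List.countP_cons]
    rw [Finset.card_filter, List.length_cons, Finset.sum_range_succ']
    simp only [List.getD_cons_succ, List.getD_cons_zero]
    rw [← Finset.card_filter, ← ih]

def usedFst (L : List (List ℕ × List ℕ)) (p : List ℕ) : Finset ℕ :=
  (L.filterMap (fun pr => if pr.1.dropLast = p then pr.1.getLast? else none)).toFinset

def usedSnd (L : List (List ℕ × List ℕ)) (q : List ℕ) : Finset ℕ :=
  usedFst (L.map Prod.swap) q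

lemma mem_usedFst {L : List (List ℕ × List ℕ)} {p : List ℕ} {i : ℕ} :
    i ∈ usedFst L p ↔ ∃ w, (p ++ [i], w) ∈ L := by
  unfold usedFst
  rw [List.mem_toFinset, List.mem_filterMap]
  constructor
  · rintro ⟨pr, hmem, hif⟩
    by_cases h : pr.1.dropLast = p
    · rw [if_pos h] at hif
      have hne : pr.1 ≠ [] := by rintro he; rw [he] at hif; simp at hif
      have : pr.1 = p ++ [i] := by
        conv_lhs => rw [← List.dropLast_append_getLast hne]
        rw [h]
        congr 1
        have := List.getLast?_eq_getLast hne
        rw [this] at hif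
        simpa using hif
      exact ⟨pr.2, by rw [← this]; exact hmem⟩
    · rw [if_neg h] at hif; simp at hif
  · rintro ⟨w, hw⟩
    refine ⟨(p ++ [i], w), hw, ?_⟩
    rw [if_pos (by simp), List.getLast?_concat]

lemma mem_usedSnd {L : List (List ℕ × List ℕ)} {q : List ℕ} {j : ℕ} :
    j ∈ usedSnd L q ↔ ∃ w, (w, q ++ [j]) ∈ L := by
  unfold usedSnd
  rw [mem_usedFst]
  constructor
  · rintro ⟨w, hw⟩
    rw [List.mem_map] at hw
    obtain ⟨pr, hpr, he⟩ := hw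
    refine ⟨pr.1, ?_⟩
    have : pr.2 = q ++ [j] := by rw [Prod.ext_iff] at he; exact he.1
    rw [← this]; exact hpr
  · rintro ⟨w, hw⟩
    exact ⟨w, List.mem_map.mpr ⟨(w, q ++ [j]), hw, rfl⟩⟩

lemma usedFst_swap (L : List (List ℕ × List ℕ)) (p : List ℕ) :
    usedFst (L.map Prod.swap) p = usedSnd L p := rfl

lemma usedSnd_swap (L : List (List ℕ × List ℕ)) (p : List ℕ) :
    usedSnd (L.map Prod.swap) p = usedFst L p := by
  unfold usedSnd
  rw [List.map_map]
  simp [Prod.swap_swap_eq]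

lemma prefix_concat_iff {l₁ l₂ : List ℕ} {a : ℕ} :
    l₁ <+: l₂ ++ [a] ↔ l₁ = l₂ ++ [a] ∨ l₁ <+: l₂ := by
  constructor
  · intro h
    rcases Nat.lt_or_ge l₁.length (l₂ ++ [a]).length with hl | hl
    · right
      rw [List.prefix_iff_eq_take] at h
      rw [h, List.take_append_of_le_length (by simp at hl; omega)]
      exact List.take_prefix _ _
    · left
      exact h.eq_of_length (Nat.le_antisymm h.length_le hl)
  · rintro (rfl | h)
    · exact List.prefix_refl _
    · exact h.trans (by exact ⟨[a], rfl⟩)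



def subD (l : List ℕ) (T : RTree) : RTree := (sub? l T).getD (.node [])

structure Good (m k : ℕ) (T₁ T₂ : RTree) (b : ℕ) (L : List (List ℕ × List ℕ)) : Prop where
  root_mem : ([], []) ∈ L
  vtx₁ : ∀ pr ∈ L, (sub? pr.1 T₁).isSome ∧ pr.1.length ≤ m
  vtx₂ : ∀ pr ∈ L, (sub? pr.2 T₂).isSome ∧ pr.2.length ≤ m
  len : ∀ pr ∈ L, pr.1.length = pr.2.length
  cpl_eq : ∀ pr ∈ L, ∀ qr ∈ L, cpl pr.1 qr.1 = cpl pr.2 qr.2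
  closed : ∀ pr ∈ L, pr.1 ≠ [] → (pr.1.dropLast, pr.2.dropLast) ∈ L
  types : ∀ pr ∈ L,
    typeOf (m - pr.1.length) k (subD pr.1 T₁) = typeOf (m - pr.1.length) k (subD pr.2 T₂)
  bound₁ : ∀ pr ∈ L, (usedFst L pr.1).card ≤ b
  bound₂ : ∀ pr ∈ L, (usedSnd L pr.2).card ≤ b

variable {m k b : ℕ} {T₁ T₂ : RTree} {L : List (List ℕ × List ℕ)}

lemma Good.mono (hG : Good m k T₁ T₂ b L) {b' : ℕ} (hb : b ≤ b') : Good m k T₁ T₂ b' L :=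
  { hG with
    bound₁ := fun pr h => le_trans (hG.bound₁ pr h) hb
    bound₂ := fun pr h => le_trans (hG.bound₂ pr h) hb }

lemma Good.fun₁ (hG : Good m k T₁ T₂ b L) {p q q' : List ℕ}
    (h1 : (p, q) ∈ L) (h2 : (p, q') ∈ L) : q = q' := by
  have hl1 := hG.len _ h1
  have hl2 := hG.len _ h2
  have hc := hG.cpl_eq _ h1 _ h2
  simp only at hl1 hl2 hc
  rw [cpl_self] at hc
  exact eq_iff_cpl.mpr ⟨by omega, by omega⟩

lemma Good.fun₂ (hG : Good m k T₁ T₂ b L) {p p' q : List ℕ}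
    (h1 : (p, q) ∈ L) (h2 : (p', q) ∈ L) : p = p' := by
  have hl1 := hG.len _ h1
  have hl2 := hG.len _ h2
  have hc := hG.cpl_eq _ h1 _ h2
  simp only at hl1 hl2 hc
  rw [cpl_self] at hc
  exact eq_iff_cpl.mpr ⟨by omega, by omega⟩

lemma Good.swap (hG : Good m k T₁ T₂ b L) : Good m k T₂ T₁ b (L.map Prod.swap) := by
  have hmem : ∀ pr, pr ∈ L.map Prod.swap ↔ (pr.2, pr.1) ∈ L := by
    intro pr
    rw [List.mem_map]
    constructor
    · rintro ⟨x, hx, rfl⟩; exact hx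
    · intro h; exact ⟨(pr.2, pr.1), h, rfl⟩
  refine
    { root_mem := (hmem ([], [])).mpr hG.root_mem
      vtx₁ := fun pr h => hG.vtx₂ _ ((hmem pr).mp h)
      vtx₂ := fun pr h => hG.vtx₁ _ ((hmem pr).mp h)
      len := fun pr h => (hG.len _ ((hmem pr).mp h)).symm
      cpl_eq := fun pr h qr h' => (hG.cpl_eq _ ((hmem pr).mp h) _ ((hmem qr).mp h')).symm
      closed := fun pr h hne => ?_
      types := fun pr h => ?_
      bound₁ := fun pr h => ?_
      bound₂ := fun pr h => ?_ }
  · have := hG.closed _ ((hmem pr).mp h) ?ne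
    · exact (hmem (pr.1.dropLast, pr.2.dropLast)).mpr this
    case ne =>
      intro he
      apply hne
      have hl := hG.len _ ((hmem pr).mp h)
      simp only at hl he
      refine List.length_eq_zero_iff.mp ?_
      rw [← hl, he]
      rfl
  · have ht := (hG.types _ ((hmem pr).mp h)).symm
    have hl := hG.len _ ((hmem pr).mp h)
    simp only at ht hl ⊢
    rw [← hl]
    exact ht
  · rw [usedFst_swap]
    exact hG.bound₂ _ ((hmem pr).mp h)
  · rw [usedSnd_swap]
    exact hG.bound₁ _ ((hmem pr).mp h)

lemma Good.dom₁_of_prefix (hG : Good m k T₁ T₂ b L) :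
    ∀ n (a z : List ℕ), a.length ≤ n → (∃ w, (a, w) ∈ L) → z <+: a → ∃ w, (z, w) ∈ L := by
  intro n
  induction n with
  | zero =>
    rintro a z ha ⟨w, hw⟩ hz
    have : a = [] := List.length_eq_zero_iff.mp (by omega)
    subst this
    rw [List.prefix_nil.mp hz]
    exact ⟨w, hw⟩
  | succ n ih =>
    rintro a z ha ⟨w, hw⟩ hz
    by_cases hlen : z.length = a.length
    · rw [hz.eq_of_length hlen]
      exact ⟨w, hw⟩
    · have hzlt : z.length < a.length := lt_of_le_of_ne hz.length_le hlen
      have hane : a ≠ [] := by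
        intro he; subst he; simp at hzlt
      have hmem := hG.closed _ hw hane
      refine ih a.dropLast z (by rw [List.length_dropLast]; omega) ⟨w.dropLast, hmem⟩ ?_
      rw [List.dropLast_eq_take, List.prefix_take_iff]
      exact ⟨hz, by omega⟩

lemma Good.mem_dom₁_of_prefix (hG : Good m k T₁ T₂ b L) {a w z : List ℕ}
    (hw : (a, w) ∈ L) (hz : z <+: a) : ∃ w', (z, w') ∈ L :=
  hG.dom₁_of_prefix a.length a z le_rfl ⟨w, hw⟩ hz

lemma Good.mem_dom₂_of_prefix (hG : Good m k T₁ T₂ b L) {a w z : List ℕ}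
    (hw : (w, a) ∈ L) (hz : z <+: a) : ∃ w', (w', z) ∈ L := by
  have hmem : (a, w) ∈ L.map Prod.swap := List.mem_map.mpr ⟨(w, a), hw, rfl⟩
  obtain ⟨w', hw'⟩ := hG.swap.mem_dom₁_of_prefix hmem hz
  obtain ⟨x, hx, he⟩ := List.mem_map.mp hw'
  have hx' : x = (w', z) := by
    have := congrArg Prod.swap he
    simpa using this
  exact ⟨w', by rw [hx'] at hx; exact hx⟩


open Classical in
lemma typeOf_succ_val (d k : ℕ) (S : RTree) (σ : TreeType d k) :
    (typeOf (d+1) k S σ).val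
      = min ((kids S).countP (fun c => decide (typeOf d k c = σ))) k := by
  cases S; rfl

open Classical in
lemma exists_fresh {d k b : ℕ} (hb : b < k) (S₁ S₂ : RTree)
    (ht : typeOf (d+1) k S₁ = typeOf (d+1) k S₂)
    (U₁ U₂ : Finset ℕ) (R : ℕ → ℕ → Prop)
    (hc : U₁.card ≤ b)
    (h₁ : ∀ i ∈ U₁, ∃ j, j ∈ U₂ ∧ R i j) (h₂ : ∀ j ∈ U₂, ∃ i, i ∈ U₁ ∧ R i j)
    (hinj₁ : ∀ i i' j, R i j → R i' j → i = i')
    (hinj₂ : ∀ i j j', R i j → R i j' → j = j')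
    (hty : ∀ i j, R i j → i < (kids S₁).length ∧ j < (kids S₂).length ∧
        typeOf d k ((kids S₁).getD i (.node [])) = typeOf d k ((kids S₂).getD j (.node [])))
    (i : ℕ) (hi : i < (kids S₁).length) (hiU : i ∉ U₁) :
    ∃ j, j < (kids S₂).length ∧ j ∉ U₂ ∧
      typeOf d k ((kids S₂).getD j (.node [])) = typeOf d k ((kids S₁).getD i (.node [])) := by
  set σ := typeOf d k ((kids S₁).getD i (.node [])) with hσ
  set A₁ := U₁.filter (fun i' => typeOf d k ((kids S₁).getD i' (.node [])) = σ) with hA₁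
  set A₂ := U₂.filter (fun j' => typeOf d k ((kids S₂).getD j' (.node [])) = σ) with hA₂
  have hcard : A₁.card = A₂.card := by
    apply Finset.card_bij (fun i' hi' => (h₁ i' (Finset.mem_filter.mp hi').1).choose)
    · intro i' hi'
      have hmem := Finset.mem_filter.mp hi'
      have hch := (h₁ i' hmem.1).choose_spec
      refine Finset.mem_filter.mpr ⟨hch.1, ?_⟩
      have := (hty _ _ hch.2).2.2
      rw [← this]
      exact hmem.2
    · intro i₁ hi₁ i₂ hi₂ he
      have hch₁ := (h₁ i₁ (Finset.mem_filter.mp hi₁).1).choose_spec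
      have hch₂ := (h₁ i₂ (Finset.mem_filter.mp hi₂).1).choose_spec
      exact hinj₁ _ _ _ hch₁.2 (he ▸ hch₂.2)
    · intro j' hj'
      have hmem := Finset.mem_filter.mp hj'
      obtain ⟨i', hi'U, hR⟩ := h₂ j' hmem.1
      have hi'A : i' ∈ A₁ := by
        refine Finset.mem_filter.mpr ⟨hi'U, ?_⟩
        rw [(hty _ _ hR).2.2]
        exact hmem.2
      refine ⟨i', hi'A, ?_⟩
      have hch := (h₁ i' hi'U).choose_spec
      exact hinj₂ _ _ _ hch.2 hR
  set F₁ := (Finset.range (kids S₁).length).filter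
      (fun i' => typeOf d k ((kids S₁).getD i' (.node [])) = σ) with hF₁
  set F₂ := (Finset.range (kids S₂).length).filter
      (fun j' => typeOf d k ((kids S₂).getD j' (.node [])) = σ) with hF₂
  have hcnt₁ : (kids S₁).countP (fun c => decide (typeOf d k c = σ)) = F₁.card := by
    rw [countP_eq_card_filter_range _ _ (.node [])]
    congr 1
    apply Finset.filter_congr
    intro x _
    simp
  have hcnt₂ : (kids S₂).countP (fun c => decide (typeOf d k c = σ)) = F₂.card := by
    rw [countP_eq_card_filter_range _ _ (.node [])]
    congr 1
    apply Finset.filter_congr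
    intro x _
    simp
  have hiA : i ∉ A₁ := fun hmem => hiU (Finset.mem_filter.mp hmem).1
  have hsub : insert i A₁ ⊆ F₁ := by
    intro x hx
    rcases Finset.mem_insert.mp hx with rfl | hx
    · exact Finset.mem_filter.mpr ⟨Finset.mem_range.mpr hi, rfl⟩
    · have hmem := Finset.mem_filter.mp hx
      obtain ⟨j', -, hR⟩ := h₁ x hmem.1
      exact Finset.mem_filter.mpr ⟨Finset.mem_range.mpr (hty _ _ hR).1, hmem.2⟩
  have hF₁card : A₁.card + 1 ≤ F₁.card := by
    have := Finset.card_le_card hsub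
    rwa [Finset.card_insert_of_notMem hiA] at this
  have hA₁b : A₁.card ≤ b := le_trans (Finset.card_le_card (Finset.filter_subset _ _)) hc
  have hmin : min F₁.card k = min F₂.card k := by
    have := congrArg Fin.val (congrFun ht σ)
    rw [typeOf_succ_val, typeOf_succ_val, hcnt₁, hcnt₂] at this
    exact this
  have hF₂card : A₁.card + 1 ≤ F₂.card := by
    have h1 : A₁.card + 1 ≤ min F₁.card k := le_min hF₁card (by omega)
    have := h1.trans (le_of_eq hmin)
    exact this.trans (min_le_left _ _)
  by_contra hno
  push_neg at hno
  have hF₂sub : F₂ ⊆ A₂ := by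
    intro j' hj'
    have hmem := Finset.mem_filter.mp hj'
    have hjlt := Finset.mem_range.mp hmem.1
    by_cases hjU : j' ∈ U₂
    · exact Finset.mem_filter.mpr ⟨hjU, hmem.2⟩
    · exact absurd hmem.2 (hno j' hjlt hjU)
  have := Finset.card_le_card hF₂sub
  omega


lemma sub?_concat_isSome {p : List ℕ} {i : ℕ} {T : RTree} :
    (sub? (p ++ [i]) T).isSome ↔ ∃ S, sub? p T = some S ∧ i < (kids S).length := by
  rw [sub?_append]
  constructor
  · intro h
    cases hp : sub? p T with
    | none => rw [hp] at h; simp at h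
    | some S =>
      rw [hp] at h
      simp only [Option.bind_some] at h
      rw [sub?_singleton] at h
      refine ⟨S, rfl, ?_⟩
      by_contra hge
      rw [List.getElem?_eq_none (by omega)] at h
      simp at h
  · rintro ⟨S, hS, hi⟩
    rw [hS]
    simp only [Option.bind_some]
    rw [sub?_singleton, List.getElem?_eq_getElem hi]
    rfl

lemma subD_concat {p : List ℕ} {i : ℕ} {T S : RTree} (hS : sub? p T = some S)
    (hi : i < (kids S).length) :
    sub? (p ++ [i]) T = some ((kids S).getD i (.node [])) := by
  rw [sub?_append, hS]
  simp only [Option.bind_some]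
  rw [sub?_singleton, List.getElem?_eq_getElem hi, List.getD_eq_getElem _ _ hi]

lemma subD_of_some {l : List ℕ} {T S : RTree} (h : sub? l T = some S) : subD l T = S := by
  simp [subD, h]


lemma concat_ne_nil' (p : List ℕ) (i : ℕ) : p ++ [i] ≠ [] := by simp

lemma eq_concat_of_len_gt {p a : List ℕ} (hpre : p <+: a) (hlt : p.length < a.length) :
    ∃ i' t, a = p ++ i' :: t := by
  obtain ⟨s, rfl⟩ := hpre
  cases s with
  | nil => simp at hlt
  | cons i' t => exact ⟨i', t, rfl⟩

lemma cpl_concat_cons {p : List ℕ} {i i' : ℕ} {t : List ℕ} (h : i ≠ i') :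
    cpl (p ++ [i]) (p ++ i' :: t) = p.length := by
  rw [cpl_append_append]
  have : cpl [i] (i' :: t) = 0 := by simp [cpl, h]
  omega

lemma Good.extend (hG : Good m k T₁ T₂ b L) (hb : b < k) :
    ∀ (x : List ℕ), (sub? x T₁).isSome → x.length ≤ m →
    ∃ y L', (sub? y T₂).isSome ∧ y.length = x.length ∧
      Good m k T₁ T₂ (b+1) L' ∧ (x, y) ∈ L' ∧ (∀ pr ∈ L, pr ∈ L') ∧
      (∀ pr ∈ L', pr ∈ L ∨ (pr.1 <+: x ∧ pr.2 <+: y)) := by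
  intro x
  induction x using List.reverseRecOn with
  | nil =>
    intro hx hxm
    exact ⟨[], L, by simp [sub?_nil], rfl, hG.mono (Nat.le_succ b), hG.root_mem,
      fun pr h => h, fun pr h => Or.inl h⟩
  | append_singleton p i ih =>
    intro hx hxm
    by_cases hxL : ∃ w, (p ++ [i], w) ∈ L
    · obtain ⟨w, hw⟩ := hxL
      exact ⟨w, L, (hG.vtx₂ _ hw).1, (hG.len _ hw).symm, hG.mono (Nat.le_succ b), hw,
        fun pr h => h, fun pr h => Or.inl h⟩
    · obtain ⟨S₁, hS₁, hilt⟩ := sub?_concat_isSome.mp hx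
      have hp_some : (sub? p T₁).isSome := by rw [hS₁]; rfl
      have hpm : p.length < m := by
        have := hxm; rw [List.length_append, List.length_singleton] at this; omega
      obtain ⟨q, L₁, hq_some, hqlen, hG₁, hpq, hLsub, hchar⟩ := ih hp_some (by omega)
      obtain ⟨S₂, hS₂⟩ := Option.isSome_iff_exists.mp hq_some
      -- basic facts
      have hxnotin₁ : ∀ w, (p ++ [i], w) ∉ L₁ := by
        intro w hw
        rcases hchar _ hw with hL | ⟨hpre, -⟩
        · exact hxL ⟨w, hL⟩
        · have := hpre.length_le
          simp at this
      have hUp : (usedFst L₁ p).card ≤ b := by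
        have hsubU : usedFst L₁ p ⊆ usedFst L p := by
          intro i' hi'
          obtain ⟨w, hw⟩ := mem_usedFst.mp hi'
          rcases hchar _ hw with hL | ⟨hpre, -⟩
          · exact mem_usedFst.mpr ⟨w, hL⟩
          · exfalso
            have := hpre.length_le
            simp at this
        by_cases hpL : ∃ w, (p, w) ∈ L
        · obtain ⟨w, hw⟩ := hpL
          exact le_trans (Finset.card_le_card hsubU) (hG.bound₁ _ hw)
        · have : usedFst L p = ∅ := by
            rw [Finset.eq_empty_iff_forall_notMem]
            intro i' hi'
            obtain ⟨w, hw⟩ := mem_usedFst.mp hi'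
            have := hG.closed _ hw (concat_ne_nil' p i')
            rw [List.dropLast_concat] at this
            exact hpL ⟨w.dropLast, this⟩
          have hcc := Finset.card_le_card hsubU
          rw [this] at hcc
          exact le_trans hcc (by simp)
      have hUq : (usedSnd L₁ q).card ≤ b := by
        have hsubU : usedSnd L₁ q ⊆ usedSnd L q := by
          intro j' hj'
          obtain ⟨w, hw⟩ := mem_usedSnd.mp hj'
          rcases hchar _ hw with hL | ⟨-, hpre⟩
          · exact mem_usedSnd.mpr ⟨w, hL⟩
          · exfalso
            have := hpre.length_le
            simp at this
        by_cases hqL : ∃ w, (w, q) ∈ L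
        · obtain ⟨w, hw⟩ := hqL
          exact le_trans (Finset.card_le_card hsubU) (hG.bound₂ _ hw)
        · have hempty : usedSnd L q = ∅ := by
            rw [Finset.eq_empty_iff_forall_notMem]
            intro j' hj'
            obtain ⟨w, hw⟩ := mem_usedSnd.mp hj'
            have hwne : w ≠ [] := by
              intro he
              have := hG.len _ hw
              rw [he] at this
              simp at this
            have := hG.closed _ hw hwne
            rw [List.dropLast_concat] at this
            exact hqL ⟨w.dropLast, this⟩
          have hc := Finset.card_le_card hsubU
          rw [hempty] at hc
          exact le_trans hc (by simp)
      -- types at (p, q)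
      set d := m - p.length - 1 with hd
      have hmd : m - p.length = d + 1 := by omega
      have htpq : typeOf (d+1) k S₁ = typeOf (d+1) k S₂ := by
        have := hG₁.types _ hpq
        simp only at this
        rw [hmd, subD_of_some hS₁, subD_of_some hS₂] at this
        exact this
      -- apply pigeonhole
      have hfresh := exists_fresh hb S₁ S₂ htpq (usedFst L₁ p) (usedSnd L₁ q)
        (fun i' j' => (p ++ [i'], q ++ [j']) ∈ L₁) hUp
        ?h₁ ?h₂ ?hinj₁ ?hinj₂ ?hty i hilt
        (fun hmem => hxnotin₁ _ (mem_usedFst.mp hmem).choose_spec)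
      case h₁ =>
        intro i' hi'
        obtain ⟨w, hw⟩ := mem_usedFst.mp hi'
        have hwne : w ≠ [] := by
          intro he
          have := hG₁.len _ hw
          rw [he] at this
          simp at this
        have hcl := hG₁.closed _ hw (concat_ne_nil' p i')
        rw [List.dropLast_concat] at hcl
        have hdrop : w.dropLast = q := hG₁.fun₁ hcl hpq
        have hwq : w = q ++ [w.getLast hwne] := by
          conv_lhs => rw [← List.dropLast_append_getLast hwne]
          rw [hdrop]
        rw [hwq] at hw
        exact ⟨w.getLast hwne, mem_usedSnd.mpr ⟨p ++ [i'], hw⟩, hw⟩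
      case h₂ =>
        intro j' hj'
        obtain ⟨w, hw⟩ := mem_usedSnd.mp hj'
        have hwne : w ≠ [] := by
          intro he
          have := hG₁.len _ hw
          rw [he] at this
          simp at this
        have hcl := hG₁.closed _ hw hwne
        rw [List.dropLast_concat] at hcl
        have hdrop : w.dropLast = p := hG₁.fun₂ hcl hpq
        have hwp : w = p ++ [w.getLast hwne] := by
          conv_lhs => rw [← List.dropLast_append_getLast hwne]
          rw [hdrop]
        rw [hwp] at hw
        exact ⟨w.getLast hwne, mem_usedFst.mpr ⟨q ++ [j'], hw⟩, hw⟩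
      case hinj₁ =>
        intro i₁ i₂ j hR₁ hR₂
        have := hG₁.fun₂ hR₁ hR₂
        simpa using this
      case hinj₂ =>
        intro i₁ j₁ j₂ hR₁ hR₂
        have := hG₁.fun₁ hR₁ hR₂
        simpa using this
      case hty =>
        intro i' j' hR
        have hv₁ := (hG₁.vtx₁ _ hR).1
        have hv₂ := (hG₁.vtx₂ _ hR).1
        obtain ⟨S₁', hS₁', hi'⟩ := sub?_concat_isSome.mp hv₁
        obtain ⟨S₂', hS₂', hj'⟩ := sub?_concat_isSome.mp hv₂
        have he₁ : S₁' = S₁ := by rw [hS₁] at hS₁'; simpa using hS₁'.symm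
        have he₂ : S₂' = S₂ := by rw [hS₂] at hS₂'; simpa using hS₂'.symm
        subst he₁; subst he₂
        refine ⟨hi', hj', ?_⟩
        have := hG₁.types _ hR
        simp only at this
        rw [List.length_append, List.length_singleton] at this
        have hmd' : m - (p.length + 1) = d := by omega
        rw [hmd'] at this
        rw [subD_of_some (subD_concat hS₁ hi'), subD_of_some (subD_concat hS₂ hj')] at this
        exact this
      obtain ⟨j, hjlt, hjU, hjty⟩ := hfresh
      have hy_some : (sub? (q ++ [j]) T₂).isSome := by rw [subD_concat hS₂ hjlt]; rfl
      have hylen : (q ++ [j]).length = (p ++ [i]).length := by simp [hqlen]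
      have hkey : ∀ pr ∈ L₁, cpl (p ++ [i]) pr.1 = cpl (q ++ [j]) pr.2 := by
        rintro ⟨a, bb⟩ hpr
        have hc := hG₁.cpl_eq _ hpq _ hpr
        have hlen := hG₁.len _ hpr
        simp only at hc hlen ⊢
        rcases lt_or_eq_of_le (cpl_le_left p a) with hlt | heq
        · rw [cpl_stable _ _ hlt, hc, cpl_stable _ _ (by rw [← hc, hqlen]; exact hlt)]
        · have hpre₁ : p <+: a := prefix_of_cpl _ _ heq
          have hpre₂ : q <+: bb := prefix_of_cpl _ _ (by rw [← hc, heq, hqlen])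
          rcases Nat.lt_or_ge p.length a.length with hplt | hple
          · obtain ⟨i', t, he₁⟩ := eq_concat_of_len_gt hpre₁ hplt
            obtain ⟨j', u, he₂⟩ := eq_concat_of_len_gt hpre₂ (by rw [hqlen, ← hlen]; exact hplt)
            have hii : i ≠ i' := by
              rintro rfl
              have hpre' : (p ++ [i]) <+: a := by
                rw [he₁]; exact ⟨t, by simp⟩
              obtain ⟨w, hw⟩ := hG₁.mem_dom₁_of_prefix hpr hpre'
              exact hxnotin₁ w hw
            have hjj : j ≠ j' := by
              rintro rfl
              have hpre' : (q ++ [j]) <+: bb := by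
                rw [he₂]; exact ⟨u, by simp⟩
              obtain ⟨w, hw⟩ := hG₁.mem_dom₂_of_prefix hpr hpre'
              exact hjU (mem_usedSnd.mpr ⟨w, hw⟩)
            rw [he₁, he₂, cpl_concat_cons hii, cpl_concat_cons hjj, hqlen]
          · have he₁ : a = p := (hpre₁.eq_of_length (le_antisymm hpre₁.length_le hple)).symm
            have he₂ : bb = q := (hpre₂.eq_of_length (by rw [he₁] at hlen; omega)).symm
            rw [he₁, he₂, cpl_comm (p ++ [i]) p, cpl_prefix_left ⟨[i], rfl⟩,
              cpl_comm (q ++ [j]) q, cpl_prefix_left ⟨[j], rfl⟩, hqlen]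
      have hused₁ : ∀ a i', i' ∈ usedFst ((p ++ [i], q ++ [j]) :: L₁) a ↔
          (a = p ∧ i' = i) ∨ i' ∈ usedFst L₁ a := by
        intro a i'
        rw [mem_usedFst, mem_usedFst]
        constructor
        · rintro ⟨w, hw⟩
          rcases List.mem_cons.mp hw with he | hmem
          · left
            have h1 : a ++ [i'] = p ++ [i] := congrArg Prod.fst he
            have h2 := congrArg List.dropLast h1
            rw [List.dropLast_concat, List.dropLast_concat] at h2
            have h3 := congrArg List.getLast? h1
            rw [List.getLast?_concat, List.getLast?_concat] at h3
            exact ⟨h2, by simpa using h3⟩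
          · exact Or.inr ⟨w, hmem⟩
        · rintro (⟨rfl, rfl⟩ | ⟨w, hmem⟩)
          · exact ⟨q ++ [j], List.mem_cons_self⟩
          · exact ⟨w, List.mem_cons_of_mem _ hmem⟩
      have hused₂ : ∀ a j', j' ∈ usedSnd ((p ++ [i], q ++ [j]) :: L₁) a ↔
          (a = q ∧ j' = j) ∨ j' ∈ usedSnd L₁ a := by
        intro a j'
        rw [mem_usedSnd, mem_usedSnd]
        constructor
        · rintro ⟨w, hw⟩
          rcases List.mem_cons.mp hw with he | hmem
          · left
            have h1 : a ++ [j'] = q ++ [j] := congrArg Prod.snd he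
            have h2 := congrArg List.dropLast h1
            rw [List.dropLast_concat, List.dropLast_concat] at h2
            have h3 := congrArg List.getLast? h1
            rw [List.getLast?_concat, List.getLast?_concat] at h3
            exact ⟨h2, by simpa using h3⟩
          · exact Or.inr ⟨w, hmem⟩
        · rintro (⟨rfl, rfl⟩ | ⟨w, hmem⟩)
          · exact ⟨p ++ [i], List.mem_cons_self⟩
          · exact ⟨w, List.mem_cons_of_mem _ hmem⟩
      refine ⟨q ++ [j], (p ++ [i], q ++ [j]) :: L₁, hy_some, hylen,
        { root_mem := List.mem_cons_of_mem _ hG₁.root_mem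
          vtx₁ := ?_, vtx₂ := ?_, len := ?_, cpl_eq := ?_, closed := ?_, types := ?_
          bound₁ := ?_, bound₂ := ?_ },
        List.mem_cons_self,
        fun pr hpr => List.mem_cons_of_mem _ (hLsub pr hpr), ?_⟩
      · rintro pr hpr
        rcases List.mem_cons.mp hpr with rfl | hmem
        · exact ⟨hx, hxm⟩
        · exact hG₁.vtx₁ _ hmem
      · rintro pr hpr
        rcases List.mem_cons.mp hpr with rfl | hmem
        · exact ⟨hy_some, by simp only; rw [hylen]; exact hxm⟩
        · exact hG₁.vtx₂ _ hmem
      · rintro pr hpr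
        rcases List.mem_cons.mp hpr with rfl | hmem
        · exact hylen.symm
        · exact hG₁.len _ hmem
      · rintro pr hpr qr hqr
        rcases List.mem_cons.mp hpr with rfl | hmem₁ <;>
          rcases List.mem_cons.mp hqr with rfl | hmem₂
        · simp only
          rw [cpl_self, cpl_self, hylen]
        · exact hkey _ hmem₂
        · simp only
          rw [cpl_comm pr.1 (p ++ [i]), cpl_comm pr.2 (q ++ [j])]
          exact hkey _ hmem₁
        · exact hG₁.cpl_eq _ hmem₁ _ hmem₂
      · rintro pr hpr hne
        rcases List.mem_cons.mp hpr with rfl | hmem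
        · simp only [List.dropLast_concat]
          exact List.mem_cons_of_mem _ hpq
        · exact List.mem_cons_of_mem _ (hG₁.closed _ hmem hne)
      · rintro pr hpr
        rcases List.mem_cons.mp hpr with rfl | hmem
        · have hmd' : m - (p.length + 1) = d := by omega
          have hlen' : (p ++ [i]).length = p.length + 1 := by simp
          simp only
          rw [hlen', hmd', subD_of_some (subD_concat hS₁ hilt), subD_of_some (subD_concat hS₂ hjlt)]
          exact hjty.symm
        · exact hG₁.types _ hmem
      · rintro pr hpr
        rcases List.mem_cons.mp hpr with rfl | hmem
        · simp only
          have hempty : ∀ i', i' ∉ usedFst ((p ++ [i], q ++ [j]) :: L₁) (p ++ [i]) := by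
            intro i' hi'
            rcases (hused₁ _ i').mp hi' with ⟨he, -⟩ | hmem'
            · have := congrArg List.length he
              simp at this
            · obtain ⟨w, hw⟩ := mem_usedFst.mp hmem'
              rcases hchar _ hw with hL | ⟨hpre, -⟩
              · have := hG.closed _ hL (concat_ne_nil' _ _)
                rw [List.dropLast_concat] at this
                exact hxL ⟨w.dropLast, this⟩
              · have := hpre.length_le
                simp at this
          rw [Finset.eq_empty_iff_forall_notMem.mpr hempty |> congrArg Finset.card]
          · exact Nat.zero_le _
        · by_cases hap : pr.1 = p
          · have hsub' : usedFst ((p ++ [i], q ++ [j]) :: L₁) pr.1 ⊆ insert i (usedFst L₁ pr.1) := by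
              intro i' hi'
              rcases (hused₁ _ i').mp hi' with ⟨-, rfl⟩ | hmem'
              · exact Finset.mem_insert_self _ _
              · exact Finset.mem_insert_of_mem hmem'
            calc (usedFst ((p ++ [i], q ++ [j]) :: L₁) pr.1).card
                ≤ (insert i (usedFst L₁ pr.1)).card := Finset.card_le_card hsub'
              _ ≤ (usedFst L₁ pr.1).card + 1 := Finset.card_insert_le _ _
              _ ≤ b + 1 := by rw [hap]; omega
          · have hsub' : usedFst ((p ++ [i], q ++ [j]) :: L₁) pr.1 ⊆ usedFst L₁ pr.1 := by
              intro i' hi'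
              rcases (hused₁ _ i').mp hi' with ⟨he, -⟩ | hmem'
              · exact absurd he hap
              · exact hmem'
            exact le_trans (Finset.card_le_card hsub') (hG₁.bound₁ _ hmem)
      · rintro pr hpr
        rcases List.mem_cons.mp hpr with rfl | hmem
        · simp only
          have hempty : ∀ j', j' ∉ usedSnd ((p ++ [i], q ++ [j]) :: L₁) (q ++ [j]) := by
            intro j' hj'
            rcases (hused₂ _ j').mp hj' with ⟨he, -⟩ | hmem'
            · have := congrArg List.length he
              simp at this
            · obtain ⟨w, hw⟩ := mem_usedSnd.mp hmem'
              rcases hchar _ hw with hL | ⟨-, hpre⟩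
              · have hwne : w ≠ [] := by
                  intro he
                  have := hG.len _ hL
                  rw [he] at this
                  simp at this
                have := hG.closed _ hL hwne
                rw [List.dropLast_concat] at this
                exact hjU (mem_usedSnd.mpr ⟨w.dropLast, hLsub _ this⟩)
              · have := hpre.length_le
                simp at this
          rw [Finset.eq_empty_iff_forall_notMem.mpr hempty |> congrArg Finset.card]
          · exact Nat.zero_le _
        · by_cases haq : pr.2 = q
          · have hsub' : usedSnd ((p ++ [i], q ++ [j]) :: L₁) pr.2 ⊆ insert j (usedSnd L₁ pr.2) := by
              intro j' hj'
              rcases (hused₂ _ j').mp hj' with ⟨-, rfl⟩ | hmem'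
              · exact Finset.mem_insert_self _ _
              · exact Finset.mem_insert_of_mem hmem'
            calc (usedSnd ((p ++ [i], q ++ [j]) :: L₁) pr.2).card
                ≤ (insert j (usedSnd L₁ pr.2)).card := Finset.card_le_card hsub'
              _ ≤ (usedSnd L₁ pr.2).card + 1 := Finset.card_insert_le _ _
              _ ≤ b + 1 := by rw [haq]; omega
          · have hsub' : usedSnd ((p ++ [i], q ++ [j]) :: L₁) pr.2 ⊆ usedSnd L₁ pr.2 := by
              intro j' hj'
              rcases (hused₂ _ j').mp hj' with ⟨he, -⟩ | hmem'
              · exact absurd he haq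
              · exact hmem'
            exact le_trans (Finset.card_le_card hsub') (hG₁.bound₂ _ hmem)
      · rintro pr hpr
        rcases List.mem_cons.mp hpr with rfl | hmem
        · exact Or.inr ⟨List.prefix_refl _, List.prefix_refl _⟩
        · rcases hchar _ hmem with hL | ⟨h1, h2⟩
          · exact Or.inl hL
          · exact Or.inr ⟨h1.trans ⟨[i], rfl⟩, h2.trans ⟨[j], rfl⟩⟩


lemma ok_of_good (hG : Good m k T₁ T₂ b L)
    (C : List (Vtx (trunc m T₁) × Vtx (trunc m T₂)))
    (hC : ∀ pr ∈ C, (pr.1.1, pr.2.1) ∈ L) :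
    DEHRok isParent isParent (fun u v => treeDist u.1 v.1) (fun u v => treeDist u.1 v.1) C := by
  intro pr hpr qr hqr
  have h1 := hC pr hpr
  have h2 := hC qr hqr
  have hl1 := hG.len _ h1
  have hl2 := hG.len _ h2
  have hc12 := hG.cpl_eq _ h1 _ h2
  simp only at hl1 hl2 hc12
  refine ⟨?_, ?_, ?_⟩
  · show (pr.1.1 ≠ [] ∧ qr.1.1 = pr.1.1.dropLast) ↔ (pr.2.1 ≠ [] ∧ qr.2.1 = pr.2.1.dropLast)
    rw [parent_iff, parent_iff, hl1, hl2, hc12]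
  · show treeDist pr.1.1 qr.1.1 = treeDist pr.2.1 qr.2.1
    unfold treeDist
    rw [hl1, hl2, hc12]
  · have e1 : (pr.1 = qr.1) ↔ pr.1.1 = qr.1.1 := Subtype.ext_iff
    have e2 : (pr.2 = qr.2) ↔ pr.2.1 = qr.2.1 := Subtype.ext_iff
    rw [e1, e2, eq_iff_cpl, eq_iff_cpl, hl1, hl2, hc12]

lemma win_of_good {m k : ℕ} {T₁ T₂ : RTree} :
    ∀ (r b : ℕ), b + r ≤ k →
    ∀ (L : List (List ℕ × List ℕ)) (C : List (Vtx (trunc m T₁) × Vtx (trunc m T₂))),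
    Good m k T₁ T₂ b L → (∀ pr ∈ C, (pr.1.1, pr.2.1) ∈ L) →
    DEHRWin isParent isParent (fun u v => treeDist u.1 v.1) (fun u v => treeDist u.1 v.1) r C := by
  intro r
  induction r with
  | zero =>
    intro b hb L C hG hC
    exact ok_of_good hG C hC
  | succ r ihr =>
    intro b hb L C hG hC
    refine ⟨ok_of_good hG C hC, ?_, ?_⟩
    · intro xv
      have hxv := xv.2
      rw [isVertex_trunc] at hxv
      obtain ⟨y, L', hy_some, hylen, hG', hxyL', hLsub, -⟩ :=
        hG.extend (by omega) xv.1 hxv.2 hxv.1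
      have hyv : isVertex y (trunc m T₂) :=
        (isVertex_trunc y m T₂).mpr ⟨by rw [hylen]; exact hxv.1, hy_some⟩
      refine ⟨⟨y, hyv⟩, ihr (b+1) (by omega) L' ((xv, ⟨y, hyv⟩) :: C) hG' ?_⟩
      intro pr hpr
      rcases List.mem_cons.mp hpr with rfl | hmem
      · exact hxyL'
      · exact hLsub _ (hC _ hmem)
    · intro yv
      have hyv := yv.2
      rw [isVertex_trunc] at hyv
      obtain ⟨x, L', hx_some, hxlen, hG', hxyL', hLsub, -⟩ :=
        hG.swap.extend (by omega) yv.1 hyv.2 hyv.1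
      have hG'' := hG'.swap
      have hxv : isVertex x (trunc m T₁) :=
        (isVertex_trunc x m T₁).mpr ⟨by rw [hxlen]; exact hyv.1, hx_some⟩
      refine ⟨⟨x, hxv⟩, ihr (b+1) (by omega) (L'.map Prod.swap) ((⟨x, hxv⟩, yv) :: C) hG'' ?_⟩
      intro pr hpr
      rcases List.mem_cons.mp hpr with rfl | hmem
      · exact List.mem_map.mpr ⟨(yv.1, x), hxyL', rfl⟩
      · exact List.mem_map.mpr ⟨(pr.2.1, pr.1.1),
          hLsub _ (List.mem_map.mpr ⟨(pr.1.1, pr.2.1), hC _ hmem, rfl⟩), rfl⟩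

end DehrAux

/-- if two rooted trees `T₁, T₂` have the same `(m,k)`-type, then
Duplicator wins the `k`-round distance-preserving Ehrenfeucht game
`DEHR[T₁|_m, T₂|_m, k]` with the designated pair of roots `(φ₁, φ₂)`. -/
theorem dehr_win_same_type (m k : ℕ) (T₁ T₂ : RTree)
    (h : typeOf m k T₁ = typeOf m k T₂) :
    DEHRWin (V₁ := Vtx (trunc m T₁)) (V₂ := Vtx (trunc m T₂))
      isParent isParent
      (fun u v => treeDist u.1 v.1) (fun u v => treeDist u.1 v.1)
      k [(root (trunc m T₁), root (trunc m T₂))] := by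
  have hused : ∀ (z : List ℕ), (DehrAux.usedFst [(([] : List ℕ), ([] : List ℕ))] z).card ≤ 0 := by
    intro z
    have : DehrAux.usedFst [(([] : List ℕ), ([] : List ℕ))] z = ∅ := by
      rw [Finset.eq_empty_iff_forall_notMem]
      intro i hi
      obtain ⟨w, hw⟩ := DehrAux.mem_usedFst.mp hi
      rw [List.mem_singleton] at hw
      have := congrArg (fun pr : List ℕ × List ℕ => pr.1.length) hw
      simp at this
    rw [this]
    simp
  have hG : DehrAux.Good m k T₁ T₂ 0 [([], [])] := by
    refine
      { root_mem := List.mem_singleton_self _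
        vtx₁ := ?_, vtx₂ := ?_, len := ?_, cpl_eq := ?_, closed := ?_, types := ?_
        bound₁ := ?_, bound₂ := ?_ } <;>
      intro pr hpr <;> rw [List.mem_singleton] at hpr <;> subst hpr
    · exact ⟨by rw [DehrAux.sub?_nil]; rfl, by simp⟩
    · exact ⟨by rw [DehrAux.sub?_nil]; rfl, by simp⟩
    · rfl
    · intro qr hqr
      rw [List.mem_singleton] at hqr
      subst hqr
      rfl
    · intro hne
      exact absurd rfl hne
    · simpa [DehrAux.subD, DehrAux.sub?_nil] using h
    · exact hused _
    · show (DehrAux.usedSnd [(([] : List ℕ), ([] : List ℕ))] []).card ≤ 0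
      have hempty : DehrAux.usedSnd [(([] : List ℕ), ([] : List ℕ))] [] = ∅ := by
        rw [Finset.eq_empty_iff_forall_notMem]
        intro j hj
        obtain ⟨w, hw⟩ := DehrAux.mem_usedSnd.mp hj
        rw [List.mem_singleton] at hw
        have := congrArg (fun pr : List ℕ × List ℕ => pr.2.length) hw
        simp at this
      rw [hempty]
      simp
  refine DehrAux.win_of_good k 0 (by omega) [([], [])]
    [(root (trunc m T₁), root (trunc m T₂))] hG ?_
  intro pr hpr
  rw [List.mem_singleton] at hpr
  subst hpr
  exact List.mem_singleton_self _
end
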